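/- arXiv:1803.01130 — 7 statements merged into one kernel-verified Lean document; each statement's English description precedes it below -/
import Mathlib

section
/- Assume (V3). Then for every t ≥ 0 and every x ∈ ℝ^N with x ≠ 0, one has N t^N [V(x) − V(tx)] + (t^N − 1)(∇V(x)·x) ≥ −((N−2)²θ/(4|x|²)) · (2 − N t^{N−2} + (N−2) t^N). -/
open MeasureTheory Filter Topology

noncomputable section

/-- `ℝ^N` as a Euclidean space. -/
abbrev Euc (N : ℕ) := EuclideanSpace ℝ (Fin N)

/-- `u` is admissible: continuously differentiable, `u ∈ L²` and `∇u ∈ L²`. -/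
def Admissible (N : ℕ) (u : Euc N → ℝ) : Prop :=
  ContDiff ℝ 1 u ∧ MemLp u 2 (volume : Measure (Euc N)) ∧
    MemLp (gradient u) 2 (volume : Measure (Euc N))

/-- The dilation `u_t(x) = u(x/t)`. -/
def dil (N : ℕ) (t : ℝ) (u : Euc N → ℝ) : Euc N → ℝ := fun x => u (t⁻¹ • x)

/-- `F(t) = ∫₀ᵗ f(s) ds`. -/
def Fprim (f : ℝ → ℝ) (t : ℝ) : ℝ := ∫ s in (0:ℝ)..t, f s

/-- `‖∇u‖₂²`. -/
def gradN2 (N : ℕ) (u : Euc N → ℝ) : ℝ := ∫ x : Euc N, ‖gradient u x‖ ^ 2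

/-- `‖u‖₂²`. -/
def l2N2 (N : ℕ) (u : Euc N → ℝ) : ℝ := ∫ x : Euc N, (u x) ^ 2

/-- `∇V(x)·x`, the radial derivative of `V` at `x`. -/
def dV (N : ℕ) (V : Euc N → ℝ) (x : Euc N) : ℝ := fderiv ℝ V x x

/-- The energy functional `I`. -/
def Ifun (N : ℕ) (V : Euc N → ℝ) (f : ℝ → ℝ) (u : Euc N → ℝ) : ℝ :=
  (1/2) * (∫ x : Euc N, (‖gradient u x‖ ^ 2 + V x * (u x) ^ 2)) -
    ∫ x : Euc N, Fprim f (u x)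

/-- The limit energy functional `I^∞`. -/
def IfunInf (N : ℕ) (Vinf : ℝ) (f : ℝ → ℝ) (u : Euc N → ℝ) : ℝ :=
  (1/2) * (∫ x : Euc N, (‖gradient u x‖ ^ 2 + Vinf * (u x) ^ 2)) -
    ∫ x : Euc N, Fprim f (u x)

/-- The Pohožaev functional `P`. -/
def Pfun (N : ℕ) (V : Euc N → ℝ) (f : ℝ → ℝ) (u : Euc N → ℝ) : ℝ :=
  ((N : ℝ) - 2) / 2 * gradN2 N u
    + (1/2) * (∫ x : Euc N, ((N : ℝ) * V x + dV N V x) * (u x) ^ 2)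
    - (N : ℝ) * ∫ x : Euc N, Fprim f (u x)

/-- The limit Pohožaev functional `P^∞`. -/
def PfunInf (N : ℕ) (Vinf : ℝ) (f : ℝ → ℝ) (u : Euc N → ℝ) : ℝ :=
  ((N : ℝ) - 2) / 2 * gradN2 N u + (N : ℝ) * Vinf / 2 * l2N2 N u
    - (N : ℝ) * ∫ x : Euc N, Fprim f (u x)

/-- The family of functionals `I_λ`. -/
def IfunL (N : ℕ) (V : Euc N → ℝ) (f : ℝ → ℝ) (lam : ℝ) (u : Euc N → ℝ) : ℝ :=
  (1/2) * (∫ x : Euc N, (‖gradient u x‖ ^ 2 + V x * (u x) ^ 2)) -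
    lam * ∫ x : Euc N, Fprim f (u x)

/-- The family of Pohožaev functionals `P_λ`. -/
def PfunL (N : ℕ) (V : Euc N → ℝ) (f : ℝ → ℝ) (lam : ℝ) (u : Euc N → ℝ) : ℝ :=
  ((N : ℝ) - 2) / 2 * gradN2 N u
    + (1/2) * (∫ x : Euc N, ((N : ℝ) * V x + dV N V x) * (u x) ^ 2)
    - (N : ℝ) * lam * ∫ x : Euc N, Fprim f (u x)

/-- The family of limit functionals `I_λ^∞`. -/
def IfunInfL (N : ℕ) (Vinf : ℝ) (f : ℝ → ℝ) (lam : ℝ) (u : Euc N → ℝ) : ℝ :=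
  (1/2) * (∫ x : Euc N, (‖gradient u x‖ ^ 2 + Vinf * (u x) ^ 2)) -
    lam * ∫ x : Euc N, Fprim f (u x)

/-- The family of limit Pohožaev functionals `P_λ^∞`. -/
def PfunInfL (N : ℕ) (Vinf : ℝ) (f : ℝ → ℝ) (lam : ℝ) (u : Euc N → ℝ) : ℝ :=
  ((N : ℝ) - 2) / 2 * gradN2 N u + (N : ℝ) * Vinf / 2 * l2N2 N u
    - (N : ℝ) * lam * ∫ x : Euc N, Fprim f (u x)

/-- (V1): `V` is continuous and nonnegative. -/
def V1cond (N : ℕ) (V : Euc N → ℝ) : Prop := Continuous V ∧ ∀ x, 0 ≤ V x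

/-- (V2): `V(y) → V_∞` as `|y| → ∞` and `V ≤ V_∞`. -/
def V2cond (N : ℕ) (V : Euc N → ℝ) (Vinf : ℝ) : Prop :=
  Tendsto V (cocompact (Euc N)) (𝓝 Vinf) ∧ ∀ x, V x ≤ Vinf

/-- (V3) with the parameter `θ ∈ [0,1)` made explicit. -/
def V3cond (N : ℕ) (V : Euc N → ℝ) (θ : ℝ) : Prop :=
  ContDiff ℝ 1 V ∧ 0 ≤ θ ∧ θ < 1 ∧
    ∀ x : Euc N, x ≠ 0 → ∀ t : ℝ, 0 < t →
      (1 ≤ t → 0 ≤ (N : ℝ) * (V x - V (t • x)) + (dV N V x - dV N V (t • x))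
        + ((N : ℝ) - 2) ^ 3 * θ / (4 * t ^ 2 * ‖x‖ ^ 2) * (t ^ 2 - 1)) ∧
      (t < 1 → (N : ℝ) * (V x - V (t • x)) + (dV N V x - dV N V (t • x))
        + ((N : ℝ) - 2) ^ 3 * θ / (4 * t ^ 2 * ‖x‖ ^ 2) * (t ^ 2 - 1) ≤ 0)

/-- (V4) with the parameter `θ ∈ [0,1)` made explicit. -/
def V4cond (N : ℕ) (V : Euc N → ℝ) (θ : ℝ) : Prop :=
  ContDiff ℝ 1 V ∧ 0 ≤ θ ∧ θ < 1 ∧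
    ∀ x : Euc N, x ≠ 0 → dV N V x ≤ ((N : ℝ) - 2) ^ 2 * θ / (2 * ‖x‖ ^ 2)

/-- (F1): continuity and subcritical growth `|f(t)| ≤ C₀(1 + |t|^{2^*-1})`. -/
def F1cond (N : ℕ) (f : ℝ → ℝ) : Prop :=
  Continuous f ∧ ∃ C₀ > (0:ℝ), ∀ t : ℝ,
    |f t| ≤ C₀ * (1 + |t| ^ (((N : ℝ) + 2) / ((N : ℝ) - 2)))

/-- (F2): `f(t) = o(t)` at `0` and `f(t) = o(|t|^{(N+2)/(N-2)})` at infinity. -/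
def F2cond (N : ℕ) (f : ℝ → ℝ) : Prop :=
  Tendsto (fun t => f t / t) (𝓝[≠] (0:ℝ)) (𝓝 0) ∧
    Tendsto (fun t : ℝ => f t / |t| ^ (((N : ℝ) + 2) / ((N : ℝ) - 2)))
      (cocompact ℝ) (𝓝 0)

/-- (F3): there exists `s₀` with `F(s₀) > (1/2)V_∞ s₀²`. -/
def F3cond (f : ℝ → ℝ) (Vinf : ℝ) : Prop :=
  ∃ s₀ : ℝ, (1/2) * Vinf * s₀ ^ 2 < Fprim f s₀
/-- (V3) implies the inequality (2.2). -/
theorem stmt_1 (N : ℕ) (hN : 3 ≤ N) (V : Euc N → ℝ) (θ : ℝ)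
    (hV3 : V3cond N V θ) :
    ∀ t : ℝ, 0 ≤ t → ∀ x : Euc N, x ≠ 0 →
      (N : ℝ) * t ^ N * (V x - V (t • x)) + (t ^ N - 1) * dV N V x ≥
        -(((N : ℝ) - 2) ^ 2 * θ / (4 * ‖x‖ ^ 2)) *
          (2 - (N : ℝ) * t ^ (N - 2) + ((N : ℝ) - 2) * t ^ N) := by
  obtain ⟨hV, hθ0, hθ1, hkey⟩ := hV3
  obtain ⟨M, rfl⟩ : ∃ M, N = M + 3 := ⟨N - 3, by omega⟩
  intro t ht x hx
  have hxn : (0:ℝ) < ‖x‖ := norm_pos_iff.mpr hx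
  have hxn' : ‖x‖ ≠ 0 := ne_of_gt hxn
  set C : ℝ := (((M:ℝ)+3) - 2) ^ 2 * θ / (4 * ‖x‖ ^ 2) with hCdef
  set h : ℝ → ℝ := fun s => ((M:ℝ)+3) * s ^ (M+3) * (V x - V (s • x))
      + (s ^ (M+3) - 1) * dV (M+3) V x
      + C * (2 - ((M:ℝ)+3) * s ^ (M+1) + (((M:ℝ)+3) - 2) * s ^ (M+3)) with hh
  have hφ : ∀ s : ℝ, HasDerivAt (fun u : ℝ => V (u • x)) (fderiv ℝ V (s • x) x) s := by
    intro s
    have h1 : HasDerivAt (fun u : ℝ => u • x) x s := by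
      simpa using (hasDerivAt_id s).smul_const x
    simpa [Function.comp_def] using
      ((hV.differentiable one_ne_zero (s • x)).hasFDerivAt).comp_hasDerivAt s h1
  have hdv : ∀ s : ℝ, dV (M+3) V (s • x) = s * (fderiv ℝ V (s • x) x) := by
    intro s
    simp [dV, _root_.map_smul, smul_eq_mul]
  set D : ℝ → ℝ := fun s => ((M:ℝ)+3) * s ^ (M+2) *
      (((M:ℝ)+3) * (V x - V (s • x)) + (dV (M+3) V x - s * fderiv ℝ V (s • x) x))
      + C * ((M:ℝ)+3) * (((M:ℝ)+3) - 2) * s ^ M * (s ^ 2 - 1) with hD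
  have hder : ∀ s : ℝ, HasDerivAt h (D s) s := by
    intro s
    have hp3 : HasDerivAt (fun u : ℝ => u ^ (M+3)) (((M:ℝ)+3) * s ^ (M+2)) s := by
      have := hasDerivAt_pow (M+3) s
      have e : M + 3 - 1 = M + 2 := by omega
      rw [e] at this
      push_cast at this
      exact this
    have hp1 : HasDerivAt (fun u : ℝ => u ^ (M+1)) (((M:ℝ)+1) * s ^ M) s := by
      have := hasDerivAt_pow (M+1) s
      have e : M + 1 - 1 = M := by omega
      rw [e] at this
      push_cast at this
      exact this
    have hA := (hp3.const_mul ((M:ℝ)+3)).mul ((hφ s).const_sub (V x))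
    have hB := (hp3.sub_const 1).mul_const (dV (M+3) V x)
    have hC2 := (((hp1.const_mul ((M:ℝ)+3)).const_sub 2).add
      (hp3.const_mul (((M:ℝ)+3)-2))).const_mul C
    have hsum := (hA.add hB).add hC2
    refine hsum.congr_deriv ?_
    simp only [hD]
    ring
  have hDpos : ∀ s : ℝ, 1 ≤ s → 0 ≤ D s := by
    intro s hs1
    have hs0 : (0:ℝ) < s := lt_of_lt_of_le one_pos hs1
    have hE := (hkey x hx s hs0).1 hs1
    push_cast at hE
    rw [hdv s] at hE
    have hEq : D s = ((M:ℝ)+3) * s ^ (M+2) *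
        (((M:ℝ)+3) * (V x - V (s • x)) + (dV (M+3) V x - s * fderiv ℝ V (s • x) x)
          + ((M:ℝ)+3 - 2) ^ 3 * θ / (4 * s ^ 2 * ‖x‖ ^ 2) * (s ^ 2 - 1)) := by
      simp only [hD, hCdef]
      field_simp
      ring
    rw [hEq]
    exact mul_nonneg (by positivity) hE
  have hDneg : ∀ s : ℝ, 0 < s → s < 1 → D s ≤ 0 := by
    intro s hs0 hs1
    have hE := (hkey x hx s hs0).2 hs1
    push_cast at hE
    rw [hdv s] at hE
    have hEq : D s = ((M:ℝ)+3) * s ^ (M+2) *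
        (((M:ℝ)+3) * (V x - V (s • x)) + (dV (M+3) V x - s * fderiv ℝ V (s • x) x)
          + ((M:ℝ)+3 - 2) ^ 3 * θ / (4 * s ^ 2 * ‖x‖ ^ 2) * (s ^ 2 - 1)) := by
      simp only [hD, hCdef]
      field_simp
      ring
    rw [hEq]
    exact mul_nonpos_iff.mpr (Or.inl ⟨by positivity, hE⟩)
  have h1z : h 1 = 0 := by
    simp only [hh]
    rw [one_smul]
    ring
  have key : ∀ s : ℝ, 0 < s → 0 ≤ h s := by
    intro s hs0
    rcases le_or_gt 1 s with hs1 | hs1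
    · have mono : MonotoneOn h (Set.Ici 1) := by
        apply monotoneOn_of_deriv_nonneg (convex_Ici 1)
        · exact fun u _ => (hder u).differentiableAt.continuousAt.continuousWithinAt
        · exact fun u _ => (hder u).differentiableAt.differentiableWithinAt
        · intro u hu
          rw [interior_Ici] at hu
          rw [(hder u).deriv]
          exact hDpos u (le_of_lt hu)
      have := mono (Set.self_mem_Ici) (Set.mem_Ici.mpr hs1) hs1
      linarith [h1z ▸ this]
    · have anti : AntitoneOn h (Set.Icc s 1) := by
        apply antitoneOn_of_deriv_nonpos (convex_Icc s 1)
        · exact fun u _ => (hder u).differentiableAt.continuousAt.continuousWithinAt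
        · exact fun u _ => (hder u).differentiableAt.differentiableWithinAt
        · intro u hu
          rw [interior_Icc] at hu
          rw [(hder u).deriv]
          exact hDneg u (lt_trans hs0 hu.1) hu.2
      have := anti (Set.mem_Icc.mpr ⟨le_refl s, le_of_lt hs1⟩)
        (Set.mem_Icc.mpr ⟨le_of_lt hs1, le_refl 1⟩) (le_of_lt hs1)
      linarith [h1z ▸ this]
  have hgoal : 0 ≤ h t := by
    rcases ht.eq_or_lt with rfl | htpos
    · have hcont : Tendsto h (𝓝[>] (0:ℝ)) (𝓝 (h 0)) :=
        ((hder 0).differentiableAt.continuousAt.tendsto).mono_left nhdsWithin_le_nhds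
      refine ge_of_tendsto hcont ?_
      filter_upwards [self_mem_nhdsWithin] with s hs
      exact key s hs
    · exact key t htpos
  have e2 : M + 3 - 2 = M + 1 := by omega
  simp only [hh] at hgoal
  rw [ge_iff_le, e2]
  push_cast
  linarith
end
end

section
/- Assume (V1), (V2) and (V3). Then for every x ∈ ℝ^N with x ≠ 0: N V_∞ − (N−2)³θ/(4|x|²) ≤ N V(x) + ∇V(x)·x ≤ N V_∞ + (N−2)²θ/(2|x|²). -/
open MeasureTheory Filter Topology

noncomputable section

set_option maxHeartbeats 1000000 in
/-- under (V1), (V2), (V3), the two-sided bound (2.9) on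
`N V(x) + ∇V(x)·x` holds for every `x ≠ 0`. -/
theorem stmt_2 (N : ℕ) (hN : 3 ≤ N) (V : Euc N → ℝ) (Vinf θ : ℝ)
    (hV1 : V1cond N V) (hV2 : V2cond N V Vinf) (hV3 : V3cond N V θ) :
    ∀ x : Euc N, x ≠ 0 →
      (N : ℝ) * Vinf - ((N : ℝ) - 2) ^ 3 * θ / (4 * ‖x‖ ^ 2) ≤
          (N : ℝ) * V x + dV N V x ∧
        (N : ℝ) * V x + dV N V x ≤
          (N : ℝ) * Vinf + ((N : ℝ) - 2) ^ 2 * θ / (2 * ‖x‖ ^ 2) := by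
  obtain ⟨M, rfl⟩ : ∃ M, N = M + 3 := ⟨N - 3, by omega⟩
  obtain ⟨hVc1, hθ0, hθ1, hV3'⟩ := hV3
  intro x hx
  have hVd : Differentiable ℝ V := hVc1.differentiable one_ne_zero
  set n : ℝ := ((M + 3 : ℕ) : ℝ) with hn
  have hn' : n = (M : ℝ) + 3 := by rw [hn]; push_cast; ring
  have hM0 : (0:ℝ) ≤ (M : ℝ) := Nat.cast_nonneg M
  have hn0 : (0:ℝ) < n := by rw [hn']; linarith
  have hn2 : (0:ℝ) < n - 2 := by rw [hn']; linarith
  have hxn : (0:ℝ) < ‖x‖ := norm_pos_iff.mpr hx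
  set A : ℝ := n * V x + dV (M+3) V x with hA
  set c : ℝ := (n - 2) ^ 3 * θ / (4 * ‖x‖ ^ 2) with hc
  have hc0 : 0 ≤ c := by
    apply div_nonneg (mul_nonneg (pow_nonneg hn2.le 3) hθ0)
    positivity
  set G : ℝ → ℝ := fun t => A * t^(M+3) / n + c * (t^(M+3)/n - t^(M+1)/(n-2))
      - t^(M+3) * V (t • x) with hGdef
  have hGcont : Continuous G := by
    have hVc := hVc1.continuous
    rw [hGdef]; fun_prop
  -- derivative of G
  have key : ∀ t : ℝ, 0 < t → HasDerivAt G
      (t^(M+2) * (A - (n * V (t • x) + dV (M+3) V (t • x)) + c * (t^2 - 1)/t^2)) t := by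
    intro t ht
    have ht0 : t ≠ 0 := ne_of_gt ht
    have hsx : HasDerivAt (fun s : ℝ => s • x) x t := by
      simpa using (hasDerivAt_id t).smul_const x
    have hVt : HasDerivAt (fun s : ℝ => V (s • x)) (fderiv ℝ V (t • x) x) t :=
      (hVd (t • x)).hasFDerivAt.comp_hasDerivAt t hsx
    have hp3 : HasDerivAt (fun s : ℝ => s ^ (M+3)) (((M:ℝ)+3) * t^(M+2)) t := by
      have h := hasDerivAt_pow (M+3) t
      have e : M + 3 - 1 = M + 2 := by omega
      rw [e] at h; push_cast at h; exact h
    have hp1 : HasDerivAt (fun s : ℝ => s ^ (M+1)) (((M:ℝ)+1) * t^M) t := by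
      have h := hasDerivAt_pow (M+1) t
      have e : M + 1 - 1 = M := by omega
      rw [e] at h; push_cast at h; exact h
    have hG' := (((hp3.const_mul A).div_const n).add
        (((hp3.div_const n).sub (hp1.div_const (n-2))).const_mul c)).sub (hp3.mul hVt)
    rw [hGdef]
    refine hG'.congr_deriv ?_
    have hdv : dV (M+3) V (t • x) = t * (fderiv ℝ V (t • x)) x := by
      simp [dV, _root_.map_smul]
    have hfd : (fderiv ℝ V (t • x)) x = dV (M+3) V (t • x) / t := by
      rw [hdv, mul_div_cancel_left₀ _ ht0]
    rw [hfd, hn']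
    have h3 : ((M:ℝ)+3) ≠ 0 := by linarith
    have h1 : ((M:ℝ)+3-2) ≠ 0 := by linarith
    field_simp
    ring
  -- sign of the derivative from (V3)
  have hsign : ∀ t : ℝ, 0 < t →
      A - (n * V (t • x) + dV (M+3) V (t • x)) + c * (t^2 - 1)/t^2
        = n * (V x - V (t • x)) + (dV (M+3) V x - dV (M+3) V (t • x))
          + (n-2)^3 * θ / (4 * t^2 * ‖x‖^2) * (t^2-1) := by
    intro t ht
    rw [hA, hc]
    field_simp
    ring
  -- lower bound
  have hmono : ∀ T : ℝ, 1 ≤ T → G 1 ≤ G T := by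
    intro T hT
    have hm : MonotoneOn G (Set.Icc 1 T) := by
      apply monotoneOn_of_hasDerivWithinAt_nonneg (convex_Icc 1 T) hGcont.continuousOn
        (f' := fun t => t^(M+2) * (A - (n * V (t • x) + dV (M+3) V (t • x)) + c * (t^2 - 1)/t^2))
      · intro t ht
        rw [interior_Icc] at ht
        exact (key t (by linarith [ht.1])).hasDerivWithinAt
      · intro t ht
        rw [interior_Icc] at ht
        have ht0 : (0:ℝ) < t := by linarith [ht.1]
        have h := (hV3' x hx t ht0).1 ht.1.le
        apply mul_nonneg (by positivity)
        rw [hsign t ht0]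
        exact h
    exact hm (Set.mem_Icc.mpr ⟨le_refl 1, hT⟩) (Set.mem_Icc.mpr ⟨hT, le_refl T⟩) hT
  have hVlim : Tendsto (fun T : ℝ => V (T • x)) atTop (𝓝 Vinf) := by
    apply hV2.1.comp
    apply tendsto_cocompact_of_tendsto_dist_comp_atTop (0 : Euc (M+3))
    have he : (fun T : ℝ => dist (T • x) 0) = fun T => |T| * ‖x‖ := by
      funext T
      rw [dist_zero_right, norm_smul, Real.norm_eq_abs]
    rw [he]
    exact tendsto_abs_atTop_atTop.atTop_mul_const hxn
  have hRlim : Tendsto (fun T : ℝ => A/n + c/n - c/((n-2)*T^2) - G 1 / T^(M+3)) atTop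
      (𝓝 (A/n + c/n)) := by
    have h1 : Tendsto (fun T : ℝ => c/((n-2)*T^2)) atTop (𝓝 0) :=
      Tendsto.div_atTop tendsto_const_nhds
        ((tendsto_pow_atTop (by norm_num)).const_mul_atTop hn2)
    have h2 : Tendsto (fun T : ℝ => G 1 / T^(M+3)) atTop (𝓝 0) :=
      Tendsto.div_atTop tendsto_const_nhds (tendsto_pow_atTop (by omega))
    simpa using (tendsto_const_nhds.sub h1).sub h2
  have hev : ∀ᶠ T in atTop,
      V (T • x) ≤ A/n + c/n - c/((n-2)*T^2) - G 1 / T^(M+3) := by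
    filter_upwards [eventually_ge_atTop (1:ℝ)] with T hT
    have hT0 : (0:ℝ) < T := by linarith
    have h := hmono T hT
    have hT3 : (0:ℝ) < T^(M+3) := pow_pos hT0 _
    have hGT : G T = A * T^(M+3) / n + c * (T^(M+3)/n - T^(M+1)/(n-2))
        - T^(M+3) * V (T • x) := by rw [hGdef]
    rw [hGT] at h
    have key2 : T^(M+3) * V (T • x)
        ≤ T^(M+3) * (A/n + c/n - c/((n-2)*T^2) - G 1 / T^(M+3)) := by
      have expand : T^(M+3) * (A/n + c/n - c/((n-2)*T^2) - G 1 / T^(M+3))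
          = A * T^(M+3) / n + c * (T^(M+3)/n - T^(M+1)/(n-2)) - G 1 := by
        field_simp
        ring
      rw [expand]
      linarith
    exact le_of_mul_le_mul_left key2 hT3
  have hVA : Vinf ≤ A/n + c/n := le_of_tendsto_of_tendsto hVlim hRlim hev
  have fact1 : n * Vinf ≤ A + c := by
    have e : n * (A/n + c/n) = A + c := by field_simp
    have h := mul_le_mul_of_nonneg_left hVA hn0.le
    rw [e] at h
    exact h
  -- upper bound
  have hanti : ∀ ε : ℝ, 0 < ε → ε < 1 → G 1 ≤ G ε := by
    intro ε h0 h1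
    have ha : AntitoneOn G (Set.Icc ε 1) := by
      apply antitoneOn_of_hasDerivWithinAt_nonpos (convex_Icc ε 1) hGcont.continuousOn
        (f' := fun t => t^(M+2) * (A - (n * V (t • x) + dV (M+3) V (t • x)) + c * (t^2 - 1)/t^2))
      · intro t ht
        rw [interior_Icc] at ht
        exact (key t (lt_trans h0 ht.1)).hasDerivWithinAt
      · intro t ht
        rw [interior_Icc] at ht
        have ht0 : (0:ℝ) < t := lt_trans h0 ht.1
        have h := (hV3' x hx t ht0).2 ht.2
        apply mul_nonpos_of_nonneg_of_nonpos (by positivity)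
        rw [hsign t ht0]
        exact h
    exact ha (Set.mem_Icc.mpr ⟨le_refl ε, h1.le⟩) (Set.mem_Icc.mpr ⟨h1.le, le_refl 1⟩) h1.le
  have hG0 : G 0 = 0 := by
    rw [hGdef]
    simp [zero_pow]
  have hup : G 1 ≤ 0 := by
    have hlim : Tendsto G (𝓝[>] (0:ℝ)) (𝓝 0) := by
      have h := hGcont.tendsto 0
      rw [hG0] at h
      exact h.mono_left nhdsWithin_le_nhds
    refine ge_of_tendsto hlim ?_
    filter_upwards [Ioo_mem_nhdsGT_of_mem (Set.mem_Ico.mpr ⟨le_refl (0:ℝ), one_pos⟩)] with ε hε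
    exact hanti ε hε.1 hε.2
  have hG1 : G 1 = A/n + c*(1/n - 1/(n-2)) - V x := by
    rw [hGdef]
    simp [one_smul]
  rw [hG1] at hup
  have hVxV : V x ≤ Vinf := hV2.2 x
  have hpos : (0:ℝ) < n * (n-2) := mul_pos hn0 hn2
  have fact2 : A * (n-2) ≤ n * V x * (n-2) + 2*c := by
    have e : n * (n-2) * (A/n + c*(1/n - 1/(n-2)) - V x)
        = A*(n-2) + c*(n-2) - c*n - n * V x * (n-2) := by
      field_simp
      ring
    have h := mul_le_mul_of_nonneg_left hup hpos.le
    rw [mul_zero, e] at h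
    linarith
  constructor
  · linarith
  · set D : ℝ := (n-2)^2 * θ / (2 * ‖x‖^2) with hD
    have hcD : D * (n-2) = 2*c := by
      rw [hD, hc]
      field_simp
      ring
    have hmul : n * V x * (n-2) ≤ n * Vinf * (n-2) :=
      mul_le_mul_of_nonneg_right (mul_le_mul_of_nonneg_left hVxV hn0.le) hn2.le
    have step : A * (n-2) ≤ (n * Vinf + D) * (n-2) := by nlinarith [fact2, hmul, hcD]
    exact le_of_mul_le_mul_right step hn2
end
end

section
/- Let V_∞ ≥ 0 and let f : ℝ → ℝ be continuous. Then for every admissible u with F∘u integrable and every t > 0: I^∞(u) ≥ I^∞(u_t) + ((1 − t^N)/N)·P^∞(u) + ((2 − N t^{N−2} + (N−2)t^N)/(2N))·‖∇u‖₂². -/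
open MeasureTheory Filter Topology

noncomputable section

lemma grad_dil {N : ℕ} {u : Euc N → ℝ} (hu : ContDiff ℝ 1 u) (t : ℝ)
    (x : Euc N) : gradient (dil N t u) x = t⁻¹ • gradient u (t⁻¹ • x) := by
  have hdiff : DifferentiableAt ℝ u (t⁻¹ • x) :=
    (hu.differentiable one_ne_zero).differentiableAt
  have hgu : HasGradientAt u (gradient u (t⁻¹ • x)) (t⁻¹ • x) :=
    hdiff.hasGradientAt
  have hfd : HasFDerivAt u ((InnerProductSpace.toDual ℝ (Euc N)) (gradient u (t⁻¹ • x)))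
      (t⁻¹ • x) := hgu.hasFDerivAt
  have hL : HasFDerivAt (fun y : Euc N => t⁻¹ • y)
      (t⁻¹ • (ContinuousLinearMap.id ℝ (Euc N))) x := by
    exact (hasFDerivAt_id x).const_smul t⁻¹
  have hcomp : HasFDerivAt (dil N t u)
      (((InnerProductSpace.toDual ℝ (Euc N)) (gradient u (t⁻¹ • x))).comp
        (t⁻¹ • (ContinuousLinearMap.id ℝ (Euc N)))) x := hfd.comp x hL
  have key : (((InnerProductSpace.toDual ℝ (Euc N)) (gradient u (t⁻¹ • x))).comp
        (t⁻¹ • (ContinuousLinearMap.id ℝ (Euc N)))) =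
      (InnerProductSpace.toDual ℝ (Euc N)) (t⁻¹ • gradient u (t⁻¹ • x)) := by
    ext v
    simp [InnerProductSpace.toDual_apply_apply, real_inner_smul_left]
  rw [key] at hcomp
  exact (hasGradientAt_iff_hasFDerivAt.mpr hcomp).gradient

/-- the IIP inequality (2.6) for the autonomous functional `I^∞`. -/
theorem stmt_4 (N : ℕ) (hN : 3 ≤ N) (Vinf : ℝ) (hVinf : 0 ≤ Vinf)
    (f : ℝ → ℝ) (hf : Continuous f)
    (u : Euc N → ℝ) (hu : Admissible N u)
    (hF : Integrable (fun x : Euc N => Fprim f (u x)))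
    (t : ℝ) (ht : 0 < t) :
    IfunInf N Vinf f u ≥
      IfunInf N Vinf f (dil N t u) + (1 - t ^ N) / (N : ℝ) * PfunInf N Vinf f u
        + (2 - (N : ℝ) * t ^ (N - 2) + ((N : ℝ) - 2) * t ^ N) / (2 * (N : ℝ)) *
            gradN2 N u := by
  obtain ⟨hC, huL2, hgL2⟩ := hu
  have ht' : t ≠ 0 := ht.ne'
  have hNne : (N : ℝ) ≠ 0 := by positivity
  have hrk : Module.finrank ℝ (Euc N) = N := finrank_euclideanSpace_fin
  have hscale : ∀ g : Euc N → ℝ, (∫ x : Euc N, g (t⁻¹ • x)) = t ^ N * ∫ x : Euc N, g x := by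
    intro g
    rw [MeasureTheory.Measure.integral_comp_inv_smul_of_nonneg volume g ht.le, hrk, smul_eq_mul]
  have hGint : Integrable (fun x : Euc N => ‖gradient u x‖ ^ 2) :=
    (memLp_two_iff_integrable_sq_norm hgL2.aestronglyMeasurable).mp hgL2
  have hLint : Integrable (fun x : Euc N => (u x) ^ 2) := huL2.integrable_sq
  have hNn : t ^ N = t ^ (N - 2) * t ^ 2 := by
    rw [← pow_add]; congr 1; omega
  have hgradd : ∀ x : Euc N, ‖gradient (dil N t u) x‖ ^ 2
      = t⁻¹ ^ 2 * ‖gradient u (t⁻¹ • x)‖ ^ 2 := by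
    intro x
    rw [grad_dil hC t x, norm_smul, mul_pow]
    congr 1
    rw [Real.norm_eq_abs, abs_inv, abs_of_pos ht]
  have hGd : gradN2 N (dil N t u) = t ^ (N - 2) * gradN2 N u := by
    have h1 : gradN2 N (dil N t u)
        = ∫ x : Euc N, t⁻¹ ^ 2 * ‖gradient u (t⁻¹ • x)‖ ^ 2 := by
      unfold gradN2
      exact integral_congr_ae (Filter.Eventually.of_forall hgradd)
    rw [h1, MeasureTheory.integral_const_mul,
      hscale (fun y => ‖gradient u y‖ ^ 2)]
    unfold gradN2
    rw [hNn]
    field_simp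
  have hLd : l2N2 N (dil N t u) = t ^ N * l2N2 N u := by
    simpa [l2N2, dil] using hscale fun y => (u y) ^ 2
  have hFd : (∫ x : Euc N, Fprim f (dil N t u x)) = t ^ N * ∫ x : Euc N, Fprim f (u x) := by
    simpa [dil] using hscale fun y => Fprim f (u y)
  have hGdint : Integrable (fun x : Euc N => ‖gradient (dil N t u) x‖ ^ 2) := by
    have h2 := (hGint.comp_smul (R := t⁻¹) (inv_ne_zero ht')).const_mul (t⁻¹ ^ 2)
    exact h2.congr (Filter.Eventually.of_forall fun x => (hgradd x).symm)
  have hLdint : Integrable (fun x : Euc N => (dil N t u x) ^ 2) := by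
    simpa [dil] using hLint.comp_smul (R := t⁻¹) (inv_ne_zero ht')
  have hIu : IfunInf N Vinf f u
      = 1/2 * (gradN2 N u + Vinf * l2N2 N u) - ∫ x : Euc N, Fprim f (u x) := by
    unfold IfunInf gradN2 l2N2
    rw [MeasureTheory.integral_add hGint (hLint.const_mul Vinf),
      MeasureTheory.integral_const_mul]
  have hId : IfunInf N Vinf f (dil N t u)
      = 1/2 * (t ^ (N - 2) * gradN2 N u + Vinf * (t ^ N * l2N2 N u))
        - t ^ N * ∫ x : Euc N, Fprim f (u x) := by
    unfold IfunInf
    rw [MeasureTheory.integral_add hGdint (hLdint.const_mul Vinf),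
      MeasureTheory.integral_const_mul]
    rw [show (∫ x : Euc N, ‖gradient (dil N t u) x‖ ^ 2) = gradN2 N (dil N t u) from rfl,
      show (∫ x : Euc N, (dil N t u x) ^ 2) = l2N2 N (dil N t u) from rfl,
      hGd, hLd, hFd]
  rw [hIu, hId, PfunInf]
  apply ge_of_eq
  generalize gradN2 N u = G
  generalize l2N2 N u = L
  generalize (∫ x : Euc N, Fprim f (u x)) = Fv
  rw [hNn]
  field_simp
  ring
end
end

section
/- Let N ≥ 3 be an integer, V_∞ ≥ 0, f : ℝ → ℝ continuous with F(t) = ∫₀^t f(s) ds, and suppose there exists s₀ ∈ ℝ with F(s₀) > (1/2)V_∞ s₀² (condition (F3)). Then there exists a Lipschitz continuous, compactly supported function u : ℝ^N → ℝ, not identically zero, such that ∫_{ℝ^N}[F(u(x)) − (1/2)V_∞ u(x)²] dx > 0; in particular the set Λ is nonempty. -/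
open MeasureTheory Filter Topology

noncomputable section

set_option maxHeartbeats 1000000 in
/-- under (F3), there is a nonzero Lipschitz compactly supported
function `u` with `∫ [F(u) - (1/2) V_∞ u²] > 0`; in particular `Λ ≠ ∅`. -/
theorem stmt_9 (N : ℕ) (hN : 3 ≤ N) (Vinf : ℝ) (hVinf : 0 ≤ Vinf)
    (f : ℝ → ℝ) (hf : Continuous f)
    (hF3 : F3cond f Vinf) :
    ∃ u : Euc N → ℝ, (∃ K : NNReal, LipschitzWith K u) ∧ HasCompactSupport u ∧
      u ≠ 0 ∧
      0 < ∫ x : Euc N, (Fprim f (u x) - (1/2) * Vinf * (u x) ^ 2) := by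
  classical
  obtain ⟨s₀, hs₀⟩ := hF3
  set G : ℝ → ℝ := fun t => Fprim f t - (1/2) * Vinf * t ^ 2 with hGdef
  have hFcont : Continuous (Fprim f) :=
    intervalIntegral.continuous_primitive (fun a b => hf.intervalIntegrable a b) 0
  have hGcont : Continuous G := hFcont.sub (by continuity)
  have hG0 : G 0 = 0 := by simp [hGdef, Fprim]
  have hc : 0 < G s₀ := by simp only [hGdef]; linarith
  have hs0ne : s₀ ≠ 0 := by
    rintro rfl
    rw [hG0] at hc; exact lt_irrefl _ hc
  set c := G s₀ with hcdef
  obtain ⟨M, hM⟩ := (isCompact_Icc (a := -|s₀|) (b := |s₀|)).exists_bound_of_continuousOn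
    hGcont.continuousOn
  set M' := max M 0 with hM'def
  have hM'nonneg : 0 ≤ M' := le_max_right _ _
  have hM' : ∀ t : ℝ, |t| ≤ |s₀| → |G t| ≤ M' := by
    intro t ht
    have := hM t (by rw [Set.mem_Icc]; constructor <;> [linarith [neg_abs_le t]; linarith [le_abs_self t]])
    calc |G t| = ‖G t‖ := (Real.norm_eq_abs _).symm
    _ ≤ M := this
    _ ≤ M' := le_max_left _ _
  -- choose δ
  have hφ : ContinuousAt (fun d : ℝ => M' * ((1 + d) ^ N - 1)) 0 := by fun_prop
  have hev : ∀ᶠ d in 𝓝 (0:ℝ), M' * ((1 + d) ^ N - 1) < c := by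
    have h0 : M' * ((1 + (0:ℝ)) ^ N - 1) < c := by simpa using hc
    exact hφ.eventually_lt continuousAt_const h0
  obtain ⟨δ, hδc, hδpos⟩ :=
    ((hev.filter_mono nhdsWithin_le_nhds).and (eventually_mem_nhdsWithin (s := Set.Ioi (0:ℝ)))).exists
  rw [Set.mem_Ioi] at hδpos
  -- the function
  set u : Euc N → ℝ := fun x => s₀ • min (δ⁻¹ • max ((1 + δ) - ‖x‖) 0) 1 with hudef
  have hlip : ∃ K : NNReal, LipschitzWith K u := by
    refine ⟨_, (lipschitzWith_smul s₀).comp ((((lipschitzWith_smul δ⁻¹).comp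
      (((LipschitzWith.const (1 + δ)).sub lipschitzWith_one_norm).max_const 0)).min_const 1))⟩
  have hucont : Continuous u := by
    obtain ⟨K, hK⟩ := hlip; exact hK.continuous
  have hclamp : ∀ x : Euc N, 0 ≤ min (δ⁻¹ • max ((1 + δ) - ‖x‖) 0) 1 ∧
      min (δ⁻¹ • max ((1 + δ) - ‖x‖) 0) 1 ≤ 1 := by
    intro x
    constructor
    · apply le_min _ zero_le_one
      have : (0:ℝ) ≤ max ((1 + δ) - ‖x‖) 0 := le_max_right _ _
      positivity
    · exact min_le_right _ _
  have hub : ∀ x : Euc N, |u x| ≤ |s₀| := by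
    intro x
    obtain ⟨h1, h2⟩ := hclamp x
    rw [hudef]
    simp only [smul_eq_mul, abs_mul]
    calc |s₀| * |min (δ⁻¹ • max ((1 + δ) - ‖x‖) 0) 1| = |s₀| * min (δ⁻¹ • max ((1 + δ) - ‖x‖) 0) 1 := by
          rw [abs_of_nonneg h1]
    _ ≤ |s₀| * 1 := by
          apply mul_le_mul_of_nonneg_left h2 (abs_nonneg _)
    _ = |s₀| := mul_one _
  have hu1 : ∀ x : Euc N, ‖x‖ < 1 → u x = s₀ := by
    intro x hx
    have h1 : max ((1 + δ) - ‖x‖) 0 = (1 + δ) - ‖x‖ := max_eq_left (by linarith)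
    have h2 : (1:ℝ) ≤ δ⁻¹ * ((1 + δ) - ‖x‖) := by
      have h3 : δ ≤ (1 + δ) - ‖x‖ := by linarith [norm_nonneg x]
      calc (1:ℝ) = δ⁻¹ * δ := (inv_mul_cancel₀ hδpos.ne').symm
      _ ≤ δ⁻¹ * ((1 + δ) - ‖x‖) := by
            apply mul_le_mul_of_nonneg_left h3 (by positivity)
    rw [hudef]
    simp only [h1, smul_eq_mul, min_eq_right h2, mul_one]
  have hu0 : ∀ x : Euc N, (1 + δ) < ‖x‖ → u x = 0 := by
    intro x hx
    have h1 : max ((1 + δ) - ‖x‖) 0 = 0 := max_eq_right (by linarith)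
    rw [hudef]
    simp [h1]
  have hsupp : HasCompactSupport u := by
    apply HasCompactSupport.intro (isCompact_closedBall (0 : Euc N) (1 + δ))
    intro x hx
    apply hu0
    simpa [Metric.mem_closedBall, dist_zero_right, not_le] using hx
  have hune : u ≠ 0 := by
    intro h
    apply hs0ne
    have h0 : u 0 = s₀ := hu1 0 (by simp)
    rw [h] at h0
    exact h0.symm
  -- integrability
  have hhc : Continuous fun x : Euc N => G (u x) := hGcont.comp hucont
  have hhsupp : HasCompactSupport fun x : Euc N => G (u x) := hsupp.comp_left hG0
  have hint : Integrable (fun x : Euc N => G (u x)) volume :=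
    hhc.integrable_of_hasCompactSupport hhsupp
  set v := (volume (Metric.ball (0 : Euc N) 1)).toReal with hvdef
  have hv : 0 < v :=
    ENNReal.toReal_pos (Metric.measure_ball_pos volume 0 one_pos).ne' measure_ball_lt_top.ne
  set A := Metric.closedBall (0 : Euc N) (1 + δ) \ Metric.ball 0 1 with hAdef
  have hAmeas : MeasurableSet A := measurableSet_closedBall.diff measurableSet_ball
  -- split the integral
  have hsplit : (∫ x in Metric.ball (0 : Euc N) 1, G (u x)) +
      ∫ x in (Metric.ball (0 : Euc N) 1)ᶜ, G (u x) = ∫ x : Euc N, G (u x) :=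
    integral_add_compl measurableSet_ball hint
  have h1 : ∫ x in Metric.ball (0 : Euc N) 1, G (u x) = c * v := by
    have : ∀ x ∈ Metric.ball (0 : Euc N) 1, G (u x) = c := by
      intro x hx
      rw [hu1 x (by simpa [dist_zero_right] using hx)]
    rw [setIntegral_congr_fun measurableSet_ball this, setIntegral_const, smul_eq_mul, mul_comm]
    rfl
  have hcompl : (Metric.ball (0 : Euc N) 1)ᶜ = A ∪ (Metric.closedBall (0 : Euc N) (1 + δ))ᶜ := by
    ext x
    simp only [Set.mem_compl_iff, Set.mem_union, hAdef, Set.mem_diff, Metric.mem_ball,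
      Metric.mem_closedBall, dist_zero_right, not_lt, not_le]
    constructor
    · intro hx
      by_cases h' : ‖x‖ ≤ 1 + δ
      · exact Or.inl ⟨h', by simpa using hx⟩
      · exact Or.inr (by linarith [not_le.mp h'])
    · rintro (⟨-, hx⟩ | hx)
      · simpa using hx
      · linarith
  have hzero : ∫ x in (Metric.closedBall (0 : Euc N) (1 + δ))ᶜ, G (u x) = 0 := by
    apply setIntegral_eq_zero_of_forall_eq_zero
    intro x hx
    rw [hu0 x (by simpa [Metric.mem_closedBall, dist_zero_right, not_le] using hx), hG0]
  have h2 : ∫ x in (Metric.ball (0 : Euc N) 1)ᶜ, G (u x) = ∫ x in A, G (u x) := by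
    rw [hcompl, setIntegral_union (disjoint_compl_right.mono_left Set.diff_subset)
      measurableSet_closedBall.compl hint.integrableOn hint.integrableOn, hzero, add_zero]
  -- volume of A
  have hfr : Module.finrank ℝ (Euc N) = N := finrank_euclideanSpace_fin
  have hvolcB : volume (Metric.closedBall (0 : Euc N) (1 + δ)) =
      ENNReal.ofReal ((1 + δ) ^ N) * volume (Metric.ball (0 : Euc N) 1) := by
    rw [Measure.addHaar_closedBall volume (0 : Euc N) (by positivity), hfr]
  have hone : (1:ℝ) ≤ (1 + δ) ^ N := one_le_pow₀ (by linarith)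
  have hvolA : (volume A).toReal = ((1 + δ) ^ N - 1) * v := by
    rw [hAdef, measure_diff ((Metric.ball_subset_closedBall).trans (Metric.closedBall_subset_closedBall (by linarith)))
      measurableSet_ball.nullMeasurableSet measure_ball_lt_top.ne, hvolcB]
    rw [ENNReal.toReal_sub_of_le
      (by nth_rewrite 1 [← one_mul (volume (Metric.ball (0 : Euc N) 1))]
          exact mul_le_mul_left (by simpa using ENNReal.ofReal_le_ofReal hone) _)
      (by exact ENNReal.mul_ne_top ENNReal.ofReal_ne_top measure_ball_lt_top.ne)]
    rw [ENNReal.toReal_mul, ENNReal.toReal_ofReal (by positivity)]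
    ring
  have hvolAfin : volume A < ⊤ :=
    lt_of_le_of_lt (measure_mono Set.diff_subset) measure_closedBall_lt_top
  have hAbound : |∫ x in A, G (u x)| ≤ M' * (volume A).toReal := by
    rw [← Real.norm_eq_abs]
    apply norm_setIntegral_le_of_norm_le_const hvolAfin
    intro x _
    rw [Real.norm_eq_abs]
    exact hM' _ (hub x)
  have hfinal : 0 < ∫ x : Euc N, G (u x) := by
    rw [← hsplit, h1, h2]
    have hlow : -(M' * ((1 + δ) ^ N - 1) * v) ≤ ∫ x in A, G (u x) := by
      have := neg_abs_le (∫ x in A, G (u x))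
      have h3 : M' * (volume A).toReal = M' * ((1 + δ) ^ N - 1) * v := by
        rw [hvolA]; ring
      rw [h3] at hAbound
      linarith
    nlinarith [mul_pos (sub_pos.mpr hδc) hv]
  refine ⟨u, hlip, hsupp, hune, ?_⟩
  simpa [hGdef] using hfinal
end
end

section
/- Let V_∞ ≥ 0 and assume (F1), (F2), (F3). Let u be admissible with F∘u integrable and ∫_{ℝ^N}[(1/2)V_∞ u² − F(u)] dx < 0. Then there exists a unique t_u > 0 such that P^∞(u_{t_u}) = 0; moreover the function t ↦ I^∞(u_t) attains its maximum over (0,∞) at t = t_u. -/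
open MeasureTheory Filter Topology

noncomputable section

lemma key_ineq (m n : ℕ) (hmn : m ≤ n) (x : ℝ) (hx : 0 ≤ x) :
    (n:ℝ) * x^m ≤ (m:ℝ) * x^n + ((n:ℝ) - m) := by
  rcases Nat.eq_zero_or_pos n with hn | hn
  · have hm : m = 0 := Nat.le_antisymm (hn ▸ hmn) (Nat.zero_le m)
    simp [hn, hm]
  have hn0 : (0:ℝ) < n := by exact_mod_cast hn
  have hm0 : (0:ℝ) ≤ m := by positivity
  have hw : (m:ℝ)/n + ((n:ℝ)-m)/n = 1 := by field_simp; ring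
  have hnm : (0:ℝ) ≤ (n:ℝ) - m := by
    have : (m:ℝ) ≤ n := by exact_mod_cast hmn
    linarith
  have h := Real.geom_mean_le_arith_mean2_weighted
    (div_nonneg hm0 hn0.le) (div_nonneg hnm hn0.le)
    (pow_nonneg hx n) zero_le_one hw
  have hpow : (x^n : ℝ) ^ ((m:ℝ)/n) = x ^ m := by
    rw [← Real.rpow_natCast x n, ← Real.rpow_mul hx]
    rw [show (n:ℝ) * ((m:ℝ)/n) = (m:ℝ) by field_simp]
    exact Real.rpow_natCast x m
  rw [hpow, Real.one_rpow, mul_one] at h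
  have h2 := mul_le_mul_of_nonneg_left h hn0.le
  calc (n:ℝ) * x^m ≤ (n:ℝ) * ((m:ℝ)/n * x^n + ((n:ℝ)-m)/n * 1) := h2
    _ = (n:ℝ) * ((m:ℝ)/n * x^n + ((n:ℝ)-m)/n) := by ring
    _ = (m:ℝ) * x^n + ((n:ℝ) - m) := by field_simp

lemma gradient_comp_smul {N : ℕ} (u : Euc N → ℝ) (hu : Differentiable ℝ u) (c : ℝ) (x : Euc N) :
    gradient (fun y => u (c • y)) x = c • gradient u (c • x) := by
  have h1 : HasFDerivAt (fun y : Euc N => c • y)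
      (c • ContinuousLinearMap.id ℝ (Euc N)) x := (hasFDerivAt_id x).const_smul c
  have h2 : HasFDerivAt (fun y : Euc N => u (c • y))
      (c • fderiv ℝ u (c • x)) x := by
    have h3 := ((hu (c • x)).hasFDerivAt).comp x h1
    have : (fderiv ℝ u (c • x)).comp (c • ContinuousLinearMap.id ℝ (Euc N))
        = c • fderiv ℝ u (c • x) := by
      ext y; simp
    rwa [this] at h3
  rw [gradient, h2.fderiv, gradient, map_smulₛₗ]
  simp

lemma integral_dil (N : ℕ) (φ : Euc N → ℝ) {t : ℝ} (ht : 0 < t) :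
    ∫ x : Euc N, φ (t⁻¹ • x) = t^N * ∫ x : Euc N, φ x := by
  rw [MeasureTheory.Measure.integral_comp_smul volume φ t⁻¹, finrank_euclideanSpace_fin,
    ← inv_pow, inv_inv, abs_of_pos (pow_pos ht N), smul_eq_mul]


set_option maxHeartbeats 1000000 in
/-- autonomous version of Lemma 2.7: for `u ∈ Λ` there is a unique
`t_u > 0` with `P^∞(u_{t_u}) = 0`, which maximizes `t ↦ I^∞(u_t)` on `(0,∞)`. -/
theorem stmt_11 (N : ℕ) (hN : 3 ≤ N) (Vinf : ℝ) (hVinf : 0 ≤ Vinf)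
    (f : ℝ → ℝ) (hF1 : F1cond N f) (hF2 : F2cond N f) (hF3 : F3cond f Vinf)
    (u : Euc N → ℝ) (hu : Admissible N u)
    (hF : Integrable (fun x : Euc N => Fprim f (u x)))
    (hΛ : (∫ x : Euc N, ((1/2) * Vinf * (u x) ^ 2 - Fprim f (u x))) < 0) :
    ∃ tu : ℝ, 0 < tu ∧ PfunInf N Vinf f (dil N tu u) = 0 ∧
      (∀ t : ℝ, 0 < t → PfunInf N Vinf f (dil N t u) = 0 → t = tu) ∧
      ∀ t : ℝ, 0 < t → IfunInf N Vinf f (dil N t u) ≤ IfunInf N Vinf f (dil N tu u) := by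
  obtain ⟨huC, huL2, hgL2⟩ := hu
  have hudiff : Differentiable ℝ u := huC.differentiable one_ne_zero
  set A := ∫ x : Euc N, ‖gradient u x‖^2 with hA_def
  set B := ∫ x : Euc N, (u x)^2 with hB_def
  set C := ∫ x : Euc N, Fprim f (u x) with hC_def
  have hIntG2 : Integrable (fun x : Euc N => ‖gradient u x‖^2) :=
    (memLp_two_iff_integrable_sq_norm hgL2.aestronglyMeasurable).1 hgL2
  have hIntU2 : Integrable (fun x : Euc N => (u x)^2) :=
    (memLp_two_iff_integrable_sq huL2.aestronglyMeasurable).1 huL2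
  have hsplit : (∫ x : Euc N, ((1/2) * Vinf * (u x)^2 - Fprim f (u x)))
      = (1/2)*Vinf*B - C := by
    rw [integral_sub (hIntU2.const_mul _) hF, MeasureTheory.integral_const_mul _ _]
  have hΛ' : (1/2)*Vinf*B - C < 0 := hsplit ▸ hΛ
  have hN2R : (2:ℝ) < (N:ℝ) := by exact_mod_cast (by omega : 2 < N)
  have hNR : (0:ℝ) < N := by linarith
  -- A > 0
  have hA_nonneg : 0 ≤ A := integral_nonneg fun x => by positivity
  have hgcont : Continuous (gradient u) := by
    show Continuous fun x => (InnerProductSpace.toDual ℝ (Euc N)).symm (fderiv ℝ u x)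
    exact (InnerProductSpace.toDual ℝ (Euc N)).symm.continuous.comp
      (huC.continuous_fderiv one_ne_zero)
  have hA_pos : 0 < A := by
    rcases hA_nonneg.lt_or_eq with h | h
    · exact h
    exfalso
    have hae := (integral_eq_zero_iff_of_nonneg (fun x => by positivity) hIntG2).1 h.symm
    have hzero : (fun x : Euc N => ‖gradient u x‖^2) = (fun _ => (0:ℝ)) :=
      (Continuous.ae_eq_iff_eq volume ((hgcont.norm).pow 2) continuous_const).1 hae
    have hgrad0 : ∀ x, gradient u x = 0 := by
      intro x
      have hx := congrFun hzero x
      simpa using hx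
    have hfderiv0 : ∀ x, fderiv ℝ u x = 0 := by
      intro x
      have hx : (InnerProductSpace.toDual ℝ (Euc N)).symm (fderiv ℝ u x) = 0 := hgrad0 x
      simpa using congrArg (InnerProductSpace.toDual ℝ (Euc N)) hx
    have hconst : ∀ x, u x = u 0 := fun x => is_const_of_fderiv_eq_zero hudiff hfderiv0 x 0
    haveI : Nontrivial (Euc N) := by
      refine ⟨0, EuclideanSpace.single (⟨0, by omega⟩ : Fin N) (1:ℝ), fun h => ?_⟩
      have := congrArg (fun v : Euc N => v (⟨0, by omega⟩ : Fin N)) h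
      simp [EuclideanSpace.single_apply] at this
    have hvol : (volume : Measure (Euc N)) Set.univ = ⊤ :=
      measure_univ_of_isAddLeftInvariant volume
    have hu0 : u 0 = 0 := by
      have hInt' : Integrable (fun _ : Euc N => (u 0)^2) := by
        have : (fun x : Euc N => (u x)^2) = fun _ : Euc N => (u 0)^2 :=
          funext fun x => by rw [hconst x]
        rwa [this] at hIntU2
      rcases integrable_const_iff.1 hInt' with hc | hc
      · exact (pow_eq_zero_iff (by norm_num : (2:ℕ) ≠ 0)).mp hc
      · haveI := hc; exact absurd (measure_lt_top volume Set.univ) (by rw [hvol]; simp)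
    have hB0 : B = 0 := by
      rw [hB_def]
      have : (fun x : Euc N => (u x)^2) = fun _ : Euc N => (0:ℝ) :=
        funext fun x => by rw [hconst x, hu0]; ring
      rw [this, integral_zero]
    have hC0 : C = 0 := by
      rw [hC_def]
      have : (fun x : Euc N => Fprim f (u x)) = fun _ : Euc N => (0:ℝ) := by
        funext x
        rw [hconst x, hu0]
        simp [Fprim]
      rw [this, integral_zero]
    rw [hB0, hC0] at hΛ'
    simp at hΛ'
  -- scaling identities
  have hsplitN : ∀ s : ℝ, s^N = s^(N-2) * s^2 := by
    intro s; rw [← pow_add]; congr 1; omega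
  have hgrad_dil : ∀ t : ℝ, 0 < t → gradN2 N (dil N t u) = t^(N-2) * A := by
    intro t ht
    have hpt : (fun x : Euc N => ‖gradient (dil N t u) x‖^2)
        = fun x : Euc N => t⁻¹^2 * ‖gradient u (t⁻¹ • x)‖^2 := by
      funext x
      rw [show gradient (dil N t u) x = gradient (fun y : Euc N => u (t⁻¹ • y)) x from rfl,
        gradient_comp_smul u hudiff t⁻¹ x, norm_smul, mul_pow, Real.norm_eq_abs, sq_abs]
    rw [gradN2, hpt,
      show (∫ x : Euc N, t⁻¹^2 * ‖gradient u (t⁻¹ • x)‖^2)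
          = t^N * ∫ x : Euc N, t⁻¹^2 * ‖gradient u x‖^2 from
        integral_dil N (fun y : Euc N => t⁻¹^2 * ‖gradient u y‖^2) ht,
      MeasureTheory.integral_const_mul _ _, hsplitN t]
    field_simp
    ring
  have hl2_dil : ∀ t : ℝ, 0 < t → l2N2 N (dil N t u) = t^N * B := by
    intro t ht
    exact integral_dil N (fun y => (u y)^2) ht
  have hF_dil : ∀ t : ℝ, 0 < t → (∫ x : Euc N, Fprim f (dil N t u x)) = t^N * C := by
    intro t ht
    exact integral_dil N (fun y => Fprim f (u y)) ht
  have hmix_dil : ∀ t : ℝ, 0 < t →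
      (∫ x : Euc N, (‖gradient (dil N t u) x‖^2 + Vinf * (dil N t u x)^2))
      = t^(N-2)*A + Vinf * (t^N * B) := by
    intro t ht
    have hpt : (fun x : Euc N => ‖gradient (dil N t u) x‖^2 + Vinf * (dil N t u x)^2)
        = fun x : Euc N => t⁻¹^2 * ‖gradient u (t⁻¹ • x)‖^2 + Vinf * (u (t⁻¹ • x))^2 := by
      funext x
      rw [show gradient (dil N t u) x = gradient (fun y : Euc N => u (t⁻¹ • y)) x from rfl,
        gradient_comp_smul u hudiff t⁻¹ x, norm_smul, mul_pow, Real.norm_eq_abs, sq_abs]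
      rfl
    rw [hpt,
      show (∫ x : Euc N, (t⁻¹^2 * ‖gradient u (t⁻¹ • x)‖^2 + Vinf * (u (t⁻¹ • x))^2))
          = t^N * ∫ x : Euc N, (t⁻¹^2 * ‖gradient u x‖^2 + Vinf * (u x)^2) from
        integral_dil N (fun y : Euc N => t⁻¹^2 * ‖gradient u y‖^2 + Vinf * (u y)^2) ht,
      integral_add (hIntG2.const_mul _) (hIntU2.const_mul _),
      MeasureTheory.integral_const_mul _ _, MeasureTheory.integral_const_mul _ _, hsplitN t]
    field_simp
    ring
  clear_value A B C
  set a0 := ((N:ℝ)-2)/2 * A with ha0_def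
  set b0 := (N:ℝ)*C - (N:ℝ)*Vinf/2*B with hb0_def
  have hb0 : 0 < b0 := by rw [hb0_def]; nlinarith
  have ha0 : 0 < a0 := by rw [ha0_def]; nlinarith
  have hPt : ∀ t : ℝ, 0 < t → PfunInf N Vinf f (dil N t u) = t^(N-2)*a0 - t^N*b0 := by
    intro t ht
    rw [PfunInf, hgrad_dil t ht, hl2_dil t ht, hF_dil t ht, ha0_def, hb0_def]
    ring
  have hIt : ∀ t : ℝ, 0 < t → IfunInf N Vinf f (dil N t u)
      = t^(N-2)*(A/2) - t^N*(b0/(N:ℝ)) := by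
    intro t ht
    rw [IfunInf, hmix_dil t ht, hF_dil t ht, hb0_def]
    field_simp
    ring
  clear_value a0 b0
  set tu := Real.sqrt (a0/b0) with htu_def
  have htu : 0 < tu := Real.sqrt_pos.2 (div_pos ha0 hb0)
  have htu2 : tu^2 * b0 = a0 := by
    rw [htu_def, Real.sq_sqrt (div_pos ha0 hb0).le]
    field_simp
  clear_value tu
  refine ⟨tu, htu, ?_, ?_, ?_⟩
  · rw [hPt tu htu, hsplitN tu]
    linear_combination (-(tu^(N-2))) * htu2
  · intro t ht hPe
    rw [hPt t ht, hsplitN t] at hPe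
    have ht2 : t^2*b0 = a0 := by
      have hne : t^(N-2) ≠ 0 := pow_ne_zero _ ht.ne'
      have hz : t^(N-2) * (a0 - t^2*b0) = 0 := by linear_combination hPe
      rcases mul_eq_zero.1 hz with h | h
      · exact absurd h hne
      · linarith
    have hsq : t^2 = tu^2 := mul_right_cancel₀ hb0.ne' (ht2.trans htu2.symm)
    calc t = Real.sqrt (t^2) := (Real.sqrt_sq ht.le).symm
      _ = Real.sqrt (tu^2) := by rw [hsq]
      _ = tu := Real.sqrt_sq htu.le
  · intro t ht
    have hIt3 : ∀ s : ℝ, 0 < s → 2*(N:ℝ)*((N:ℝ)-2)*IfunInf N Vinf f (dil N s u)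
        = 2*(N:ℝ)*(s^(N-2)*(tu^2*b0)) - 2*((N:ℝ)-2)*(s^N*b0) := by
      intro s hs
      rw [hIt s hs, htu2, ha0_def]
      field_simp
    set x := t/tu with hx_def
    have hx0 : 0 ≤ x := by positivity
    have hxt : t = x*tu := by rw [hx_def]; field_simp
    have hkey := key_ineq (N-2) N (by omega) x hx0
    have hcast : ((N-2:ℕ):ℝ) = (N:ℝ) - 2 := by
      rw [Nat.cast_sub (by omega : 2 ≤ N)]; norm_num
    rw [hcast, hsplitN x] at hkey
    have hc' : (0:ℝ) ≤ tu^(N-2)*tu^2*b0 := by positivity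
    have h1 := mul_le_mul_of_nonneg_left hkey hc'
    have H : 2*(N:ℝ)*((N:ℝ)-2)*IfunInf N Vinf f (dil N t u)
        ≤ 2*(N:ℝ)*((N:ℝ)-2)*IfunInf N Vinf f (dil N tu u) := by
      rw [hIt3 t ht, hIt3 tu htu, hxt, mul_pow, mul_pow, hsplitN tu, hsplitN x]
      nlinarith [h1]
    exact le_of_mul_le_mul_left H (by nlinarith : (0:ℝ) < 2*(N:ℝ)*((N:ℝ)-2))
end
end

section
/- Let N ≥ 3 be an integer, a > 0, b > 0, α ≥ 2, and define V : ℝ^N → ℝ by V(x) = a − b/(1 + |x|^α). If either α = 2 and 4b < (N−2)², or α > 2 and ((α−2)^{(α−2)/α}(α+2)^{(α+2)/α}/(2α))·b < (N−2)², then V satisfies (V4): there exists θ ∈ [0,1) such that ∇V(x)·x ≤ (N−2)²θ/(2|x|²) for all x ∈ ℝ^N \ {0}. -/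
open MeasureTheory Filter Topology

noncomputable section

private lemma aux_ne {α : ℝ} (hα : 2 ≤ α) : ∀ t ∈ Set.Ioi (-1:ℝ), 1 + t ^ (α/2) ≠ 0 := by
  intro t ht
  rcases le_or_gt 0 t with h0 | h0
  · positivity
  · have h1 : |t ^ (α/2)| < 1 := by
      calc |t ^ (α/2)| ≤ |t| ^ (α/2) := Real.abs_rpow_le_abs_rpow t _
        _ < 1 := Real.rpow_lt_one (abs_nonneg t)
            (abs_lt.mpr ⟨ht, h0.trans one_pos⟩) (by linarith)
    have := neg_abs_le (t ^ (α/2))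
    rw [abs_lt] at h1
    intro h; linarith [h1.1]

private lemma gCD (a b α : ℝ) (hα : 2 ≤ α) :
    ContDiffOn ℝ 1 (fun t : ℝ => a - b * (1 + t ^ (α/2))⁻¹) (Set.Ioi (-1:ℝ)) := by
  refine contDiffOn_const.sub (contDiffOn_const.mul (ContDiffOn.inv ?_ (aux_ne hα)))
  exact contDiffOn_const.add
    ((Real.contDiff_rpow_const_of_le (p := α/2) (n := 1) (by push_cast; linarith)).contDiffOn)

private lemma hV_comp {N : ℕ} (a b α : ℝ) (V : EuclideanSpace ℝ (Fin N) → ℝ)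
    (hV : ∀ x, V x = a - b / (1 + ‖x‖ ^ α)) :
    V = (fun t : ℝ => a - b * (1 + t ^ (α/2))⁻¹) ∘ (fun x : EuclideanSpace ℝ (Fin N) => ‖x‖^2) := by
  funext x
  have e1 : ((‖x‖:ℝ)^2) ^ (α/2) = ‖x‖ ^ α := by
    rw [← Real.rpow_natCast ‖x‖ 2, ← Real.rpow_mul (norm_nonneg x)]
    norm_num
    congr 1; ring
  simp only [Function.comp_apply]
  rw [hV x, e1, div_eq_mul_inv]

private lemma dV_eq' {N : ℕ} (a b α : ℝ) (hα : 2 ≤ α)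
    (x : EuclideanSpace ℝ (Fin N)) (hx : x ≠ 0) :
    fderiv ℝ ((fun t : ℝ => a - b * (1 + t ^ (α/2))⁻¹) ∘
      (fun y : EuclideanSpace ℝ (Fin N) => ‖y‖^2)) x x
      = b * α * ‖x‖ ^ α / (1 + ‖x‖ ^ α) ^ 2 := by
  have hr : (0:ℝ) < ‖x‖ := norm_pos_iff.mpr hx
  set t₀ : ℝ := ‖x‖ ^ 2 with ht₀def
  have ht₀ : 0 < t₀ := by positivity
  have h1 : HasDerivAt (fun t : ℝ => t ^ (α/2)) ((α/2) * t₀ ^ (α/2 - 1)) t₀ :=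
    Real.hasDerivAt_rpow_const (Or.inl ht₀.ne')
  have h2 : HasDerivAt (fun t : ℝ => 1 + t ^ (α/2)) ((α/2) * t₀ ^ (α/2 - 1)) t₀ :=
    h1.const_add 1
  have hne : 1 + t₀ ^ (α/2) ≠ 0 := by positivity
  have h3 := h2.inv hne
  have h4 := (h3.const_mul b).const_sub a
  have hns : HasFDerivAt (fun y : EuclideanSpace ℝ (Fin N) => ‖y‖^2)
      (2 • (innerSL ℝ x)) x := (hasStrictFDerivAt_norm_sq x).hasFDerivAt
  have hcomp := HasDerivAt.comp_hasFDerivAt x h4 hns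
  rw [(show HasFDerivAt ((fun t : ℝ => a - b * (1 + t ^ (α/2))⁻¹) ∘
      (fun y : EuclideanSpace ℝ (Fin N) => ‖y‖^2)) _ x from hcomp).fderiv]
  have happ : ((-(b * (-((α/2) * t₀ ^ (α/2 - 1)) / (1 + t₀ ^ (α/2)) ^ 2))) •
      (2 • (innerSL ℝ x))) x
      = (-(b * (-((α/2) * t₀ ^ (α/2 - 1)) / (1 + t₀ ^ (α/2)) ^ 2))) * (2 * ‖x‖^2) := by
    simp only [ContinuousLinearMap.smul_apply, innerSL_apply_apply,
      real_inner_self_eq_norm_sq, smul_eq_mul]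
    ring
  rw [happ]
  have e1 : t₀ ^ (α/2) = ‖x‖ ^ α := by
    rw [ht₀def, ← Real.rpow_natCast ‖x‖ 2, ← Real.rpow_mul (norm_nonneg x)]
    norm_num; congr 1; ring
  have e2 : t₀ ^ (α/2 - 1) * t₀ = ‖x‖ ^ α := by
    have : t₀ ^ (α/2 - 1) * t₀ ^ (1:ℝ) = t₀ ^ (α/2 - 1 + 1) := (Real.rpow_add ht₀ _ _).symm
    rw [Real.rpow_one] at this
    rw [this]; rw [show α/2 - 1 + 1 = α/2 by ring, e1]
  have e2' : t₀ ^ (α/2 - 1) * t₀ = t₀ ^ (α/2) := e2.trans e1.symm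
  rw [← e1]
  have hx2 : (‖x‖:ℝ)^2 = t₀ := rfl
  rw [hx2]
  rw [show -(b * (-(α / 2 * t₀ ^ (α / 2 - 1)) / (1 + t₀ ^ (α / 2)) ^ 2)) * (2 * t₀)
      = b * α * (t₀ ^ (α/2 - 1) * t₀) / (1 + t₀ ^ (α / 2)) ^ 2 by ring, e2']

private lemma amgm_key {α : ℝ} (hα : 2 < α) {s : ℝ} (hs : 0 < s) :
    4 * α ^ 2 * s ^ ((α + 2) / α) ≤
      (α - 2) ^ ((α - 2) / α) * (α + 2) ^ ((α + 2) / α) * (1 + s) ^ 2 := by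
  have hα0 : (0:ℝ) < α := by linarith
  set w₁ : ℝ := (α - 2) / (2 * α) with hw₁def
  set w₂ : ℝ := (α + 2) / (2 * α) with hw₂def
  have hw₁ : 0 < w₁ := by apply div_pos <;> linarith
  have hw₂ : 0 < w₂ := by apply div_pos <;> linarith
  have hsum : w₁ + w₂ = 1 := by rw [hw₁def, hw₂def]; field_simp; ring
  have hAM := Real.geom_mean_le_arith_mean2_weighted hw₁.le hw₂.le
    (inv_nonneg.mpr hw₁.le) (le_of_lt (div_pos hs hw₂)) hsum
  have hRHS : w₁ * w₁⁻¹ + w₂ * (s / w₂) = 1 + s := by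
    rw [mul_inv_cancel₀ hw₁.ne', mul_div_cancel₀ _ hw₂.ne']
  rw [hRHS] at hAM
  have hA : (0:ℝ) ≤ w₁⁻¹ ^ w₁ * (s / w₂) ^ w₂ := by positivity
  have hsq : (w₁⁻¹ ^ w₁ * (s / w₂) ^ w₂) ^ 2 ≤ (1 + s) ^ 2 := pow_le_pow_left₀ hA hAM 2
  have hsqr : ∀ x w : ℝ, 0 ≤ x → (x ^ w) ^ 2 = x ^ (2 * w) := by
    intro x w hx
    rw [← Real.rpow_natCast (x ^ w) 2, ← Real.rpow_mul hx]
    norm_num; congr 1; ring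
  have hexp1 : 2 * w₁ = (α - 2) / α := by rw [hw₁def]; field_simp
  have hexp2 : 2 * w₂ = (α + 2) / α := by rw [hw₂def]; field_simp
  have hLHSsq : (w₁⁻¹ ^ w₁ * (s / w₂) ^ w₂) ^ 2
      = w₁⁻¹ ^ ((α - 2) / α) * (s / w₂) ^ ((α + 2) / α) := by
    rw [mul_pow, hsqr _ _ (inv_nonneg.mpr hw₁.le), hsqr _ _ (div_pos hs hw₂).le, hexp1, hexp2]
  rw [hLHSsq] at hsq
  have key : (α - 2) ^ ((α - 2) / α) * (α + 2) ^ ((α + 2) / α) *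
      (w₁⁻¹ ^ ((α - 2) / α) * (s / w₂) ^ ((α + 2) / α)) = 4 * α ^ 2 * s ^ ((α + 2) / α) := by
    have m1 : (α - 2) ^ ((α - 2) / α) * w₁⁻¹ ^ ((α - 2) / α) = (2 * α) ^ ((α - 2) / α) := by
      rw [← Real.mul_rpow (by linarith) (inv_nonneg.mpr hw₁.le)]
      congr 1
      have : α - 2 ≠ 0 := by linarith
      rw [hw₁def]; field_simp
    have m2 : (α + 2) ^ ((α + 2) / α) * (s / w₂) ^ ((α + 2) / α)
        = (2 * α) ^ ((α + 2) / α) * s ^ ((α + 2) / α) := by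
      rw [← Real.mul_rpow (by linarith) (div_pos hs hw₂).le,
        ← Real.mul_rpow (by positivity) hs.le]
      congr 1
      rw [hw₂def]; field_simp
    calc (α - 2) ^ ((α - 2) / α) * (α + 2) ^ ((α + 2) / α) *
        (w₁⁻¹ ^ ((α - 2) / α) * (s / w₂) ^ ((α + 2) / α))
        = ((α - 2) ^ ((α - 2) / α) * w₁⁻¹ ^ ((α - 2) / α)) *
          ((α + 2) ^ ((α + 2) / α) * (s / w₂) ^ ((α + 2) / α)) := by ring
      _ = (2 * α) ^ ((α - 2) / α) * ((2 * α) ^ ((α + 2) / α) * s ^ ((α + 2) / α)) := by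
          rw [m1, m2]
      _ = (2 * α) ^ ((α - 2) / α + (α + 2) / α) * s ^ ((α + 2) / α) := by
          rw [Real.rpow_add (by linarith)]; ring
      _ = 4 * α ^ 2 * s ^ ((α + 2) / α) := by
          rw [show (α - 2) / α + (α + 2) / α = 2 by field_simp; ring,
            show (2:ℝ) = ((2:ℕ):ℝ) by norm_num, Real.rpow_natCast]
          ring
  calc 4 * α ^ 2 * s ^ ((α + 2) / α)
      = (α - 2) ^ ((α - 2) / α) * (α + 2) ^ ((α + 2) / α) *
        (w₁⁻¹ ^ ((α - 2) / α) * (s / w₂) ^ ((α + 2) / α)) := key.symm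
    _ ≤ (α - 2) ^ ((α - 2) / α) * (α + 2) ^ ((α + 2) / α) * (1 + s) ^ 2 := by
        exact mul_le_mul_of_nonneg_left hsq
          (mul_nonneg (Real.rpow_nonneg (by linarith) _) (Real.rpow_nonneg (by linarith) _))

/-- the potential `V(x) = a - b/(1 + |x|^α)` satisfies (V4) under
the stated smallness conditions on `b`. -/
theorem stmt_16 (N : ℕ) (hN : 3 ≤ N) (a b α : ℝ)
    (ha : 0 < a) (hb : 0 < b) (hα : 2 ≤ α)
    (V : Euc N → ℝ) (hV : ∀ x : Euc N, V x = a - b / (1 + ‖x‖ ^ α))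
    (hcase : (α = 2 ∧ 4 * b < ((N : ℝ) - 2) ^ 2) ∨
      (2 < α ∧ (α - 2) ^ ((α - 2) / α) * (α + 2) ^ ((α + 2) / α) / (2 * α) * b <
        ((N : ℝ) - 2) ^ 2)) :
    ∃ θ : ℝ, V4cond N V θ := by
  have hcomp := hV_comp (N := N) a b α V hV
  have hα0 : (0:ℝ) < α := by linarith
  have hN3 : (3:ℝ) ≤ (N:ℝ) := by exact_mod_cast hN
  have hNpos : (0:ℝ) < ((N:ℝ) - 2) ^ 2 := by nlinarith
  have hCD : ContDiff ℝ 1 V := by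
    rw [hcomp]
    refine (gCD a b α hα).comp_contDiff (contDiff_norm_sq ℝ) (fun x => ?_)
    simp only [Set.mem_Ioi]
    nlinarith [sq_nonneg ‖x‖]
  have hdV : ∀ x : Euc N, x ≠ 0 → dV N V x = b * α * ‖x‖ ^ α / (1 + ‖x‖ ^ α) ^ 2 := by
    intro x hx
    show fderiv ℝ V x x = _
    rw [hcomp]
    exact dV_eq' a b α hα x hx
  rcases hcase with ⟨rfl, h4b⟩ | ⟨hα2, hC⟩
  · -- α = 2
    refine ⟨4 * b / ((N:ℝ) - 2) ^ 2, hCD, by positivity, (div_lt_one hNpos).mpr h4b, ?_⟩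
    intro x hx
    have hr : (0:ℝ) < ‖x‖ := norm_pos_iff.mpr hx
    rw [hdV x hx]
    have e0 : (‖x‖:ℝ) ^ (2:ℝ) = ‖x‖ ^ (2:ℕ) := by
      rw [show (2:ℝ) = ((2:ℕ):ℝ) by norm_num, Real.rpow_natCast]
    rw [e0, div_le_div_iff₀ (by positivity) (mul_pos two_pos (pow_pos hr 2))]
    have hsimp : ((N:ℝ) - 2) ^ 2 * (4 * b / ((N:ℝ) - 2) ^ 2) = 4 * b := by
      rw [mul_comm]; exact div_mul_cancel₀ _ hNpos.ne'
    rw [hsimp]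
    nlinarith [hb.le, sq_nonneg ‖x‖, mul_nonneg hb.le (sq_nonneg ‖x‖),
      mul_nonneg (mul_nonneg hb.le (sq_nonneg ‖x‖)) (sq_nonneg ‖x‖)]
  · -- 2 < α
    refine ⟨(α - 2) ^ ((α - 2) / α) * (α + 2) ^ ((α + 2) / α) / (2 * α) * b /
        ((N:ℝ) - 2) ^ 2, hCD, ?_, (div_lt_one hNpos).mpr hC, ?_⟩
    · have hD : (0:ℝ) ≤ (α - 2) ^ ((α - 2) / α) * (α + 2) ^ ((α + 2) / α) :=
        mul_nonneg (Real.rpow_nonneg (by linarith) _) (Real.rpow_nonneg (by linarith) _)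
      have : (0:ℝ) ≤ (α - 2) ^ ((α - 2) / α) * (α + 2) ^ ((α + 2) / α) / (2 * α) * b :=
        mul_nonneg (div_nonneg hD (by linarith)) hb.le
      positivity
    · intro x hx
      have hr : (0:ℝ) < ‖x‖ := norm_pos_iff.mpr hx
      rw [hdV x hx]
      set s : ℝ := ‖x‖ ^ α with hsdef
      have hs : 0 < s := Real.rpow_pos_of_pos hr α
      rw [div_le_div_iff₀ (by positivity) (mul_pos two_pos (pow_pos hr 2))]
      have hsimp : ((N:ℝ) - 2) ^ 2 * ((α - 2) ^ ((α - 2) / α) * (α + 2) ^ ((α + 2) / α) /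
          (2 * α) * b / ((N:ℝ) - 2) ^ 2)
          = (α - 2) ^ ((α - 2) / α) * (α + 2) ^ ((α + 2) / α) / (2 * α) * b := by
        rw [mul_comm]; exact div_mul_cancel₀ _ hNpos.ne'
      rw [hsimp]
      have e3 : s * ‖x‖ ^ (2:ℕ) = s ^ ((α + 2) / α) := by
        rw [hsdef, ← Real.rpow_natCast ‖x‖ 2, ← Real.rpow_add hr, ← Real.rpow_mul hr.le]
        congr 1
        push_cast
        field_simp
      have e5 : b * α * s * (2 * ‖x‖ ^ 2) = 2 * b * α * (s * ‖x‖ ^ (2:ℕ)) := by ring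
      rw [e5, e3]
      have key := amgm_key hα2 hs
      have hb2α : (0:ℝ) < b / (2 * α) := div_pos hb (by linarith)
      have step := mul_le_mul_of_nonneg_left key hb2α.le
      have h5 : b / (2 * α) * (4 * α ^ 2 * s ^ ((α + 2) / α))
          = 2 * b * α * s ^ ((α + 2) / α) := by
        field_simp; ring
      have h6 : b / (2 * α) * ((α - 2) ^ ((α - 2) / α) * (α + 2) ^ ((α + 2) / α) * (1 + s) ^ 2)
          = (α - 2) ^ ((α - 2) / α) * (α + 2) ^ ((α + 2) / α) / (2 * α) * b * (1 + s) ^ 2 := by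
        ring
      rw [h5, h6] at step
      exact step
end
end

section
/- Assume (V4). Then for every admissible u such that x ↦ (∇V(x)·x)u(x)² is integrable, (1/N)‖∇u‖₂² − (1/(2N))∫_{ℝ^N}(∇V(x)·x)u² dx ≥ ((1−θ)/N)‖∇u‖₂². In particular, for any continuous f and λ ∈ ℝ, every admissible u with P_λ(u) = 0 (and F∘u, V u², (∇V(x)·x)u² integrable) satisfies I_λ(u) ≥ ((1−θ)/N)‖∇u‖₂² ≥ 0. -/
open MeasureTheory Filter Topology

noncomputable section

section HardyAux
open Set Metric

lemma oneD_hardy (n : ℕ) (hn : 3 ≤ n) (v v' : ℝ → ℝ)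
    (hv : ∀ r, HasDerivAt v (v' r) r) (hv' : Continuous v')
    (hA : ∫⁻ r in Ioi (0:ℝ), ENNReal.ofReal (v r ^ 2 * r ^ (n-1)) < ⊤) :
    ∫⁻ r in Ioi (0:ℝ), ENNReal.ofReal (v r ^ 2 * r ^ (n-3)) ≤
      ENNReal.ofReal (4 / ((n:ℝ) - 2) ^ 2) *
        ∫⁻ r in Ioi (0:ℝ), ENNReal.ofReal (v' r ^ 2 * r ^ (n-1)) := by
  have hn3 : (3:ℝ) ≤ (n:ℝ) := by exact_mod_cast hn
  obtain ⟨c, hc, hc0⟩ : ∃ c : ℝ, c = (n:ℝ) - 2 ∧ 0 < c := ⟨_, rfl, by linarith⟩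
  rw [← hc]
  have hvc : Continuous v := by
    rw [continuous_iff_continuousAt]; exact fun r => (hv r).continuousAt
  set B := ∫⁻ r in Ioi (0:ℝ), ENNReal.ofReal (v' r ^ 2 * r ^ (n-1)) with hB
  set L := ENNReal.ofReal (4 / c ^ 2) * B with hL
  -- convert interval integrals of nonneg continuous functions to lintegrals
  have conv1 : ∀ (a b : ℝ), a ≤ b → ∀ f : ℝ → ℝ, Continuous f → (∀ r ∈ Ioc a b, 0 ≤ f r) →
      ∫⁻ r in Ioc a b, ENNReal.ofReal (f r) = ENNReal.ofReal (∫ r in a..b, f r) := by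
    intro a b hab f hf hf0
    rw [intervalIntegral.integral_of_le hab,
      ofReal_integral_eq_lintegral_ofReal (hf.integrableOn_Ioc)
        ((ae_restrict_iff' measurableSet_Ioc).2 (ae_of_all _ hf0))]
  -- the key interval inequality
  have key : ∀ a b : ℝ, 0 < a → a ≤ b →
      ∫ r in a..b, v r ^ 2 * r ^ (n-3) ≤
        2 * (v b ^ 2 * b ^ (n-2) / c) + (4 / c^2) * ∫ r in a..b, v' r ^ 2 * r ^ (n-1) := by
    intro a b ha hab
    set ψ : ℝ → ℝ := fun r => 2 * v r * v' r * r^(n-2) + v r^2 * (c * r^(n-3)) with hψ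
    have hψc : Continuous ψ := by fun_prop
    have hFTC : ∫ r in a..b, ψ r = v b ^2 * b^(n-2) - v a ^2 * a^(n-2) := by
      apply intervalIntegral.integral_eq_sub_of_hasDerivAt
      · intro r hr
        have h1 : HasDerivAt (fun r => v r ^ 2) (2 * v r * v' r) r := by
          have := (hv r).pow 2
          exact this.congr_deriv (by ring)
        have h2 : HasDerivAt (fun r : ℝ => r ^ (n-2)) (c * r^(n-3)) r := by
          have := hasDerivAt_pow (n-2) r
          have e1 : ((n-2:ℕ):ℝ) = c := by
            rw [hc]; push_cast [Nat.cast_sub (by omega : 2 ≤ n)]; ring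
          have e2 : n - 2 - 1 = n - 3 := by omega
          rwa [e1, e2] at this
        exact h1.mul h2
      · exact hψc.intervalIntegrable _ _
    have hmono : ∫ r in a..b, (c^2/2) * (v r ^2 * r^(n-3)) ≤
        ∫ r in a..b, (c * ψ r + 2 * (v' r ^2 * r^(n-1))) := by
      apply intervalIntegral.integral_mono_on hab
      · exact (by fun_prop : Continuous fun r => (c^2/2) * (v r ^2 * r^(n-3))).intervalIntegrable _ _
      · exact (by fun_prop : Continuous fun r => (c * ψ r + 2 * (v' r ^2 * r^(n-1)))).intervalIntegrable _ _
      · intro r hr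
        have hr0 : 0 ≤ r := le_trans ha.le hr.1
        have hp : r^(n-2) = r^(n-3) * r := by
          rw [← pow_succ]; congr 1; omega
        have hq : r^(n-1) = r^(n-3) * r^2 := by
          rw [← pow_add]; congr 1; omega
        have hP : (0:ℝ) ≤ r^(n-3) := pow_nonneg hr0 _
        simp only [hψ, hp, hq]
        nlinarith [mul_nonneg hP (sq_nonneg (c * v r + 2 * v' r * r))]
    have hIl : ∫ r in a..b, (c^2/2) * (v r ^2 * r^(n-3))
        = (c^2/2) * ∫ r in a..b, v r ^2 * r^(n-3) := intervalIntegral.integral_const_mul _ _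
    have hIr : ∫ r in a..b, (c * ψ r + 2 * (v' r ^2 * r^(n-1)))
        = c * (∫ r in a..b, ψ r) + 2 * ∫ r in a..b, v' r ^2 * r^(n-1) := by
      rw [intervalIntegral.integral_add ((show Continuous fun r => c * ψ r from continuous_const.mul hψc).intervalIntegrable _ _)
        ((by fun_prop : Continuous fun r => 2 * (v' r ^2 * r^(n-1))).intervalIntegrable _ _),
        intervalIntegral.integral_const_mul, intervalIntegral.integral_const_mul]
    rw [hIl, hIr, hFTC] at hmono
    have ha2 : 0 ≤ v a ^2 * a^(n-2) := by positivity
    set X := ∫ r in a..b, v r ^ 2 * r ^ (n-3) with hX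
    set G := ∫ r in a..b, v' r ^ 2 * r ^ (n-1) with hG
    have h2 : (c^2/2) * X ≤ c * (v b ^2 * b^(n-2)) + 2 * G := by nlinarith
    have h3 := mul_le_mul_of_nonneg_left h2 (by positivity : (0:ℝ) ≤ 2/c^2)
    have e3 : (2/c^2) * ((c^2/2) * X) = X := by field_simp
    have e4 : (2/c^2) * (c * (v b ^2 * b^(n-2)) + 2 * G)
        = 2 * (v b ^2 * b^(n-2) / c) + (4/c^2) * G := by field_simp; ring
    rw [e3, e4] at h3; exact h3
  rcases eq_or_ne B ⊤ with hBtop | hBne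
  · rw [hL, hBtop, ENNReal.mul_top]
    · exact le_top
    · simp only [ne_eq, ENNReal.ofReal_eq_zero, not_le]; positivity
  set A' := (∫⁻ r in Ioi (0:ℝ), ENNReal.ofReal (v r ^ 2 * r ^ (n-1))).toReal with hA'
  have hA'0 : 0 ≤ A' := ENNReal.toReal_nonneg
  have hvcont : Continuous (fun r : ℝ => v r ^ 2 * r ^ (n-1)) := by fun_prop
  -- choice of good boundary points
  have hbdry : ∀ k : ℕ, ∃ b : ℝ, (k:ℝ) + 1 ≤ b ∧ v b ^ 2 * b ^ (n-1) ≤ A' / ((k:ℝ)+1) := by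
    intro k
    have hk1 : (0:ℝ) < (k:ℝ) + 1 := by positivity
    obtain ⟨b, hbmem, hbmin⟩ := (isCompact_Icc (a := (k:ℝ)+1) (b := 2*((k:ℝ)+1))).exists_isMinOn
      (f := fun r : ℝ => v r ^ 2 * r ^ (n-1))
      (nonempty_Icc.2 (by linarith)) hvcont.continuousOn
    refine ⟨b, hbmem.1, ?_⟩
    have hint : ((k:ℝ)+1) * (v b ^ 2 * b ^ (n-1)) ≤
        ∫ r in ((k:ℝ)+1)..(2*((k:ℝ)+1)), v r ^ 2 * r ^ (n-1) := by
      have hm := intervalIntegral.integral_mono_on (by linarith : (k:ℝ)+1 ≤ 2*((k:ℝ)+1))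
        (intervalIntegrable_const (μ := volume) (c := v b ^ 2 * b ^ (n-1)))
        (hvcont.intervalIntegrable _ _) (fun r hr => hbmin hr)
      rw [intervalIntegral.integral_const, smul_eq_mul] at hm
      calc ((k:ℝ)+1) * (v b ^ 2 * b ^ (n-1))
          = (2*((k:ℝ)+1) - ((k:ℝ)+1)) * (v b ^ 2 * b ^ (n-1)) := by ring_nf
        _ ≤ _ := hm
    have hle : ∫ r in ((k:ℝ)+1)..(2*((k:ℝ)+1)), v r ^ 2 * r ^ (n-1) ≤ A' := by
      rw [← ENNReal.ofReal_le_iff_le_toReal hA.ne] at *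
      rw [← conv1 _ _ (by linarith) _ hvcont
        (fun r hr => mul_nonneg (sq_nonneg _) (pow_nonneg (lt_trans hk1 hr.1).le _))]
      exact lintegral_mono_set (fun r hr => lt_trans hk1 hr.1)
    rw [le_div_iff₀ hk1]
    calc v b ^ 2 * b ^ (n-1) * ((k:ℝ)+1) = ((k:ℝ)+1) * (v b ^ 2 * b ^ (n-1)) := by ring
      _ ≤ A' := le_trans hint hle
  -- bound the integral over each Ioc (1/(j+1)) (j+1)
  have hIoc : ∀ j : ℕ, ∫⁻ r in Ioc (1/((j:ℝ)+1)) ((j:ℝ)+1),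
      ENNReal.ofReal (v r ^ 2 * r ^ (n-3)) ≤ L := by
    intro j
    have hj1 : (0:ℝ) < (j:ℝ) + 1 := by positivity
    have haj : (0:ℝ) < 1/((j:ℝ)+1) := by positivity
    have haj1 : 1/((j:ℝ)+1) ≤ 1 := by
      rw [div_le_one hj1]; linarith
    have htend : Tendsto (fun k : ℕ => ENNReal.ofReal ((2/c) * (A'/((k:ℝ)+1))) + L)
        atTop (𝓝 L) := by
      have h0 : Tendsto (fun k : ℕ => (2/c) * (A'/((k:ℝ)+1))) atTop (𝓝 0) := by
        have := tendsto_one_div_add_atTop_nhds_zero_nat.const_mul ((2/c) * A')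
        simpa [mul_zero, div_eq_mul_inv, mul_assoc] using this
      have h1 := (ENNReal.tendsto_ofReal h0)
      rw [ENNReal.ofReal_zero] at h1
      simpa using h1.add (tendsto_const_nhds (x := L))
    refine ge_of_tendsto htend ?_
    filter_upwards [eventually_ge_atTop j] with k hk
    obtain ⟨b, hbk, hbA⟩ := hbdry k
    have hb1 : (1:ℝ) ≤ b := by
      have : (1:ℝ) ≤ (k:ℝ)+1 := by push_cast; linarith [Nat.cast_nonneg (α := ℝ) k]
      linarith
    have hjb : ((j:ℝ)+1) ≤ b := by
      have : ((j:ℝ)+1) ≤ (k:ℝ)+1 := by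
        have : (j:ℝ) ≤ (k:ℝ) := by exact_mod_cast hk
        linarith
      linarith
    have hab : 1/((j:ℝ)+1) ≤ b := le_trans haj1 hb1
    have hGle : ENNReal.ofReal (∫ r in (1/((j:ℝ)+1))..b, v' r ^ 2 * r ^ (n-1)) ≤ B := by
      rw [← conv1 _ _ hab _ (by fun_prop)
        (fun r hr => mul_nonneg (sq_nonneg _) (pow_nonneg (lt_trans haj hr.1).le _))]
      exact lintegral_mono_set (fun r hr => lt_trans haj hr.1)
    have hbd : 2 * (v b ^ 2 * b ^ (n-2) / c) ≤ (2/c) * (A'/((k:ℝ)+1)) := by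
      have hpow : b ^ (n-2) ≤ b ^ (n-1) := pow_le_pow_right₀ hb1 (by omega)
      have h1 : v b ^ 2 * b ^ (n-2) ≤ v b ^ 2 * b ^ (n-1) :=
        mul_le_mul_of_nonneg_left hpow (sq_nonneg _)
      have h2 : v b ^ 2 * b ^ (n-2) ≤ A' / ((k:ℝ)+1) := le_trans h1 hbA
      have h3 := mul_le_mul_of_nonneg_left h2 (le_of_lt (by positivity : (0:ℝ) < 2/c))
      calc 2 * (v b ^ 2 * b ^ (n-2) / c) = (2/c) * (v b ^ 2 * b ^ (n-2)) := by ring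
        _ ≤ (2/c) * (A' / ((k:ℝ)+1)) := h3
    calc ∫⁻ r in Ioc (1/((j:ℝ)+1)) ((j:ℝ)+1), ENNReal.ofReal (v r ^ 2 * r ^ (n-3))
        ≤ ∫⁻ r in Ioc (1/((j:ℝ)+1)) b, ENNReal.ofReal (v r ^ 2 * r ^ (n-3)) :=
          lintegral_mono_set (Ioc_subset_Ioc_right hjb)
      _ = ENNReal.ofReal (∫ r in (1/((j:ℝ)+1))..b, v r ^ 2 * r ^ (n-3)) :=
          conv1 _ _ hab _ (by fun_prop)
            (fun r hr => mul_nonneg (sq_nonneg _) (pow_nonneg (lt_trans haj hr.1).le _))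
      _ ≤ ENNReal.ofReal (2 * (v b ^ 2 * b ^ (n-2) / c)
            + (4/c^2) * ∫ r in (1/((j:ℝ)+1))..b, v' r ^ 2 * r ^ (n-1)) :=
          ENNReal.ofReal_le_ofReal (key _ _ haj hab)
      _ ≤ ENNReal.ofReal (2 * (v b ^ 2 * b ^ (n-2) / c))
            + ENNReal.ofReal ((4/c^2) * ∫ r in (1/((j:ℝ)+1))..b, v' r ^ 2 * r ^ (n-1)) :=
          ENNReal.ofReal_add_le
      _ ≤ ENNReal.ofReal ((2/c) * (A'/((k:ℝ)+1))) + L := by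
          apply add_le_add (ENNReal.ofReal_le_ofReal hbd)
          rw [ENNReal.ofReal_mul (by positivity), hL]
          exact mul_le_mul_right hGle _
  have hunion : Ioi (0:ℝ) = ⋃ j : ℕ, Ioc (1/((j:ℝ)+1)) ((j:ℝ)+1) := by
    ext r
    simp only [mem_Ioi, mem_iUnion, mem_Ioc]
    constructor
    · intro hr
      obtain ⟨j, hj⟩ := exists_nat_gt (max (1/r) r)
      have hj1 : 1/r < (j:ℝ) + 1 := lt_trans (lt_of_le_of_lt (le_max_left _ _) hj) (by linarith)
      have hj2 : r ≤ (j:ℝ) + 1 := le_trans (le_of_lt (lt_of_le_of_lt (le_max_right _ _) hj)) (by linarith)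
      refine ⟨j, ?_, hj2⟩
      rw [div_lt_iff₀ (by positivity)]
      rw [div_lt_iff₀ hr] at hj1
      linarith
    · rintro ⟨j, h1, h2⟩
      exact lt_trans (by positivity) h1
  have hdir : Directed (· ⊆ ·) (fun j : ℕ => Ioc (1/((j:ℝ)+1)) ((j:ℝ)+1)) := by
    apply Monotone.directed_le
    intro i j hij
    have hij' : (i:ℝ) ≤ (j:ℝ) := by exact_mod_cast hij
    apply Ioc_subset_Ioc
    · apply one_div_le_one_div_of_le (by positivity)
      linarith
    · linarith
  rw [hunion, setLIntegral_iUnion_of_directed _ hdir]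
  exact iSup_le hIoc

lemma lintegral_polar (N : ℕ) (hN : 3 ≤ N)
    (g : EuclideanSpace ℝ (Fin N) → ENNReal) (hg : Measurable g) :
    ∫⁻ x, g x = ∫⁻ ω : sphere (0 : EuclideanSpace ℝ (Fin N)) 1,
      ∫⁻ r in Ioi (0:ℝ), ENNReal.ofReal (r ^ (N-1)) * g (r • (ω : EuclideanSpace ℝ (Fin N)))
      ∂(volume : Measure ℝ)
      ∂(volume : Measure (EuclideanSpace ℝ (Fin N))).toSphere := by
  let E := EuclideanSpace ℝ (Fin N)
  haveI : Nontrivial E := by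
    apply Module.nontrivial_of_finrank_pos (R := ℝ)
    rw [finrank_euclideanSpace_fin]
    omega
  have hdim : Module.finrank ℝ E = N := finrank_euclideanSpace_fin
  have h1 : ∫⁻ x, g x ∂(volume : Measure E) = ∫⁻ x in ({0}ᶜ : Set E), g x := by
    rw [← setLIntegral_univ]
    apply setLIntegral_congr
    symm
    rw [ae_eq_univ, compl_compl]
    exact measure_singleton 0
  have h2 : ∫⁻ x in ({0}ᶜ : Set E), g x
      = ∫⁻ y : ({0}ᶜ : Set E), g y ∂((volume : Measure E).comap Subtype.val) :=
    (lintegral_subtype_comap (measurableSet_singleton 0).compl _).symm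
  have mp := Measure.measurePreserving_homeomorphUnitSphereProd (volume : Measure E)
  have hcont : Continuous (fun p : sphere (0:E) 1 × Ioi (0:ℝ) => (p.2 : ℝ) • (p.1 : E)) :=
    (continuous_subtype_val.comp continuous_snd).smul
      (continuous_subtype_val.comp continuous_fst)
  have h3 : ∫⁻ y : ({0}ᶜ : Set E), g y ∂((volume : Measure E).comap Subtype.val)
      = ∫⁻ p : sphere (0:E) 1 × Ioi (0:ℝ), g ((p.2 : ℝ) • (p.1 : E))
        ∂(((volume : Measure E).toSphere).prod (.volumeIoiPow (Module.finrank ℝ E - 1))) := by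
    have hmeas : Measurable fun p : sphere (0:E) 1 × Ioi (0:ℝ) => g ((p.2 : ℝ) • (p.1 : E)) :=
      hg.comp hcont.measurable
    rw [← mp.lintegral_comp hmeas]
    apply lintegral_congr
    intro y
    congr 1
    simp only [homeomorphUnitSphereProd_apply_snd_coe, homeomorphUnitSphereProd_apply_fst_coe]
    exact (smul_inv_smul₀ (norm_ne_zero_iff.2 y.2) _).symm
  have h4 : ∫⁻ p : sphere (0:E) 1 × Ioi (0:ℝ), g ((p.2 : ℝ) • (p.1 : E))
        ∂(((volume : Measure E).toSphere).prod (.volumeIoiPow (Module.finrank ℝ E - 1)))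
      = ∫⁻ ω : sphere (0:E) 1, ∫⁻ r : Ioi (0:ℝ), g ((r : ℝ) • (ω : E))
          ∂(Measure.volumeIoiPow (Module.finrank ℝ E - 1)) ∂(volume : Measure E).toSphere :=
    lintegral_prod _ (hg.comp hcont.measurable : Measurable fun p : sphere (0:E) 1 × Ioi (0:ℝ) => g ((p.2 : ℝ) • (p.1 : E))).aemeasurable
  rw [h1, h2, h3, h4]
  apply lintegral_congr
  intro ω
  have hdens : Measurable fun r : Ioi (0:ℝ) => ENNReal.ofReal ((r:ℝ) ^ (Module.finrank ℝ E - 1)) :=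
    ENNReal.measurable_ofReal.comp ((measurable_subtype_coe).pow_const _)
  have hgm : Measurable fun r : Ioi (0:ℝ) => g ((r:ℝ) • (ω:E)) :=
    hg.comp (measurable_subtype_coe.smul_const _)
  rw [Measure.volumeIoiPow, lintegral_withDensity_eq_lintegral_mul _ hdens hgm]
  simp only [Pi.mul_apply]
  rw [lintegral_subtype_comap measurableSet_Ioi
    (fun x : ℝ => ENNReal.ofReal (x ^ (Module.finrank ℝ E - 1)) * g (x • (ω:E)))]
  simp only [hdim]

lemma hardy (N : ℕ) (hN : 3 ≤ N) (u : EuclideanSpace ℝ (Fin N) → ℝ)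
    (hu : ContDiff ℝ 1 u) (hu2 : Integrable (fun x => u x ^ 2)) :
    ∫⁻ x, ENNReal.ofReal (u x ^ 2 / ‖x‖ ^ 2) ≤
      ENNReal.ofReal (4 / ((N:ℝ) - 2) ^ 2) *
        ∫⁻ x, ENNReal.ofReal (‖gradient u x‖ ^ 2) := by
  let E := EuclideanSpace ℝ (Fin N)
  have huc : Continuous u := hu.continuous
  have hfderiv : Continuous fun x : E => fderiv ℝ u x := hu.continuous_fderiv one_ne_zero
  have hgrad : Continuous fun x : E => gradient u x := by
    simp only [gradient]
    exact (InnerProductSpace.toDual ℝ E).symm.continuous.comp hfderiv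
  have hgradnorm : ∀ x : E, ‖gradient u x‖ = ‖fderiv ℝ u x‖ := fun x =>
    (InnerProductSpace.toDual ℝ E).symm.norm_map _
  -- measurable integrands
  have hg1 : Measurable fun x : E => ENNReal.ofReal (u x ^ 2 / ‖x‖ ^ 2) := by fun_prop
  have hg2 : Measurable fun x : E => ENNReal.ofReal (‖gradient u x‖ ^ 2) := by fun_prop
  have hg3 : Measurable fun x : E => ENNReal.ofReal (u x ^ 2) := by fun_prop
  -- a.e. slice finiteness of ∫ u² r^{N-1}
  have hfin : ∫⁻ ω : sphere (0:E) 1, (∫⁻ r in Ioi (0:ℝ),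
      ENNReal.ofReal (r ^ (N-1)) * ENNReal.ofReal (u (r • (ω:E)) ^ 2)) ∂(volume : Measure E).toSphere < ⊤ := by
    rw [← lintegral_polar N hN _ hg3]
    exact hu2.lintegral_lt_top
  have hmeas_slice : Measurable fun ω : sphere (0:E) 1 => ∫⁻ r in Ioi (0:ℝ),
      ENNReal.ofReal (r ^ (N-1)) * ENNReal.ofReal (u (r • (ω:E)) ^ 2) := by
    apply Measurable.lintegral_prod_right (f := fun (ω : sphere (0:E) 1) (r : ℝ) =>
      ENNReal.ofReal (r ^ (N-1)) * ENNReal.ofReal (u (r • (ω:E)) ^ 2))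
    fun_prop
  have hae := ae_lt_top hmeas_slice hfin.ne
  -- slice-wise Hardy
  have hslice : ∀ᵐ ω : sphere (0:E) 1 ∂(volume : Measure E).toSphere,
      (∫⁻ r in Ioi (0:ℝ), ENNReal.ofReal (r ^ (N-1)) * ENNReal.ofReal (u (r • (ω:E)) ^ 2 / r ^ 2))
        ≤ ENNReal.ofReal (4 / ((N:ℝ) - 2) ^ 2) *
          ∫⁻ r in Ioi (0:ℝ), ENNReal.ofReal (r ^ (N-1)) * ENNReal.ofReal (‖gradient u (r • (ω:E))‖ ^ 2) := by
    filter_upwards [hae] with ω hω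
    set v : ℝ → ℝ := fun r => u (r • (ω:E)) with hv
    set v' : ℝ → ℝ := fun r => fderiv ℝ u (r • (ω:E)) (ω:E) with hv'
    have hvd : ∀ r, HasDerivAt v (v' r) r := by
      intro r
      have h1 : HasDerivAt (fun s : ℝ => s • (ω:E)) (ω:E) r := by
        simpa using (hasDerivAt_id r).smul_const (ω:E)
      have := ((hu.differentiable one_ne_zero (r • (ω:E))).hasFDerivAt).comp_hasDerivAt r h1
      exact this
    have hv'c : Continuous v' := by
      apply Continuous.clm_apply _ continuous_const
      exact hfderiv.comp (continuous_id.smul continuous_const)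
    have hA : ∫⁻ r in Ioi (0:ℝ), ENNReal.ofReal (v r ^ 2 * r ^ (N-1)) < ⊤ := by
      refine lt_of_le_of_lt (le_of_eq (setLIntegral_congr_fun measurableSet_Ioi
        (fun r hr => ?_))) hω
      have hr0 : (0:ℝ) ≤ r := le_of_lt hr
      rw [← ENNReal.ofReal_mul (pow_nonneg hr0 _)]
      congr 1
      ring
    have h1d := oneD_hardy N hN v v' hvd hv'c hA
    calc ∫⁻ r in Ioi (0:ℝ), ENNReal.ofReal (r ^ (N-1)) * ENNReal.ofReal (u (r • (ω:E)) ^ 2 / r ^ 2)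
        = ∫⁻ r in Ioi (0:ℝ), ENNReal.ofReal (v r ^ 2 * r ^ (N-3)) := by
          apply setLIntegral_congr_fun measurableSet_Ioi
          intro r hr
          dsimp only
          have hr0 : (0:ℝ) < r := hr
          rw [← ENNReal.ofReal_mul (pow_nonneg hr0.le _)]
          congr 1
          have : r ^ (N-1) = r ^ (N-3) * r ^ 2 := by
            rw [← pow_add]; congr 1; omega
          field_simp [this]
          simp only [this, hv]
          ring
      _ ≤ ENNReal.ofReal (4 / ((N:ℝ) - 2) ^ 2) *
            ∫⁻ r in Ioi (0:ℝ), ENNReal.ofReal (v' r ^ 2 * r ^ (N-1)) := h1d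
      _ ≤ _ := by
          apply mul_le_mul_right
          apply setLIntegral_mono' measurableSet_Ioi
          intro r hr
          have hrp : (0:ℝ) ≤ r := le_of_lt hr
          rw [← ENNReal.ofReal_mul (pow_nonneg hrp _)]
          apply ENNReal.ofReal_le_ofReal
          have hb : |v' r| ≤ ‖gradient u (r • (ω:E))‖ := by
            rw [hgradnorm]
            calc |v' r| = ‖fderiv ℝ u (r • (ω:E)) (ω:E)‖ := rfl
              _ ≤ ‖fderiv ℝ u (r • (ω:E))‖ * ‖(ω:E)‖ := (fderiv ℝ u (r • (ω:E))).le_opNorm _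
              _ = ‖fderiv ℝ u (r • (ω:E))‖ := by
                  rw [mem_sphere_zero_iff_norm.1 ω.2, mul_one]
          have hr0 : (0:ℝ) ≤ r := le_of_lt hr
          have h2 : v' r ^ 2 ≤ ‖gradient u (r • (ω:E))‖ ^ 2 := by
            rw [← sq_abs (v' r)]
            exact pow_le_pow_left₀ (abs_nonneg _) hb 2
          calc v' r ^ 2 * r ^ (N-1) ≤ ‖gradient u (r • (ω:E))‖ ^ 2 * r ^ (N-1) :=
                mul_le_mul_of_nonneg_right h2 (by positivity)
            _ = r ^ (N-1) * ‖gradient u (r • (ω:E))‖ ^ 2 := by ring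
  -- integrate over the sphere
  calc ∫⁻ x, ENNReal.ofReal (u x ^ 2 / ‖x‖ ^ 2)
      = ∫⁻ ω : sphere (0:E) 1, (∫⁻ r in Ioi (0:ℝ),
          ENNReal.ofReal (r ^ (N-1)) * ENNReal.ofReal (u (r • (ω:E)) ^ 2 / r ^ 2))
          ∂(volume : Measure E).toSphere := by
        rw [lintegral_polar N hN _ hg1]
        apply lintegral_congr
        intro ω
        apply setLIntegral_congr_fun measurableSet_Ioi
        intro r hr
        dsimp only
        congr 2
        rw [norm_smul, mem_sphere_zero_iff_norm.1 ω.2, mul_one,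
          Real.norm_eq_abs, abs_of_pos hr]
    _ ≤ ∫⁻ ω : sphere (0:E) 1, ENNReal.ofReal (4 / ((N:ℝ) - 2) ^ 2) *
          (∫⁻ r in Ioi (0:ℝ),
          ENNReal.ofReal (r ^ (N-1)) * ENNReal.ofReal (‖gradient u (r • (ω:E))‖ ^ 2))
          ∂(volume : Measure E).toSphere := lintegral_mono_ae hslice
    _ = ENNReal.ofReal (4 / ((N:ℝ) - 2) ^ 2) * ∫⁻ ω : sphere (0:E) 1,
          (∫⁻ r in Ioi (0:ℝ),
          ENNReal.ofReal (r ^ (N-1)) * ENNReal.ofReal (‖gradient u (r • (ω:E))‖ ^ 2))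
          ∂(volume : Measure E).toSphere := lintegral_const_mul' _ _ ENNReal.ofReal_ne_top
    _ = _ := by rw [← lintegral_polar N hN _ hg2]

end HardyAux

/-- under (V4), `Ψ(u) = (1/N)‖∇u‖₂² - (1/2N)∫(∇V·x)u²` dominates
`((1-θ)/N)‖∇u‖₂²`; in particular every `u` with `P_λ(u) = 0` satisfies
`I_λ(u) ≥ ((1-θ)/N)‖∇u‖₂² ≥ 0`. -/
theorem stmt_19 (N : ℕ) (hN : 3 ≤ N) (V : Euc N → ℝ) (θ : ℝ)
    (hV4 : V4cond N V θ) :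
    (∀ u : Euc N → ℝ, Admissible N u →
      Integrable (fun x : Euc N => dV N V x * (u x) ^ 2) →
      (1 - θ) / (N : ℝ) * gradN2 N u ≤
        1 / (N : ℝ) * gradN2 N u
          - 1 / (2 * (N : ℝ)) * ∫ x : Euc N, dV N V x * (u x) ^ 2) ∧
    ∀ f : ℝ → ℝ, Continuous f → ∀ lam : ℝ, ∀ u : Euc N → ℝ, Admissible N u →
      Integrable (fun x : Euc N => Fprim f (u x)) →
      Integrable (fun x : Euc N => V x * (u x) ^ 2) →
      Integrable (fun x : Euc N => dV N V x * (u x) ^ 2) →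
      PfunL N V f lam u = 0 →
      (1 - θ) / (N : ℝ) * gradN2 N u ≤ IfunL N V f lam u ∧
        0 ≤ IfunL N V f lam u := by
  obtain ⟨hVc1, hθ0, hθ1, hVbd⟩ := hV4
  have hN0 : (0:ℝ) < N := by positivity
  have hN3 : (3:ℝ) ≤ (N:ℝ) := by exact_mod_cast hN
  have hc0 : (0:ℝ) < (N:ℝ) - 2 := by linarith
  -- main claim: ∫ dV u² ≤ 2θ ‖∇u‖²
  have main : ∀ u : Euc N → ℝ, Admissible N u →
      Integrable (fun x : Euc N => dV N V x * (u x) ^ 2) →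
      (∫ x : Euc N, dV N V x * (u x) ^ 2) ≤ 2 * θ * gradN2 N u := by
    intro u hu hint
    obtain ⟨huc, hu2, hugrad⟩ := hu
    have huC : Continuous u := huc.continuous
    have hgradC : Continuous fun x : Euc N => gradient u x := by
      simp only [gradient]
      exact (InnerProductSpace.toDual ℝ (Euc N)).symm.continuous.comp
        (huc.continuous_fderiv one_ne_zero)
    have husq : Integrable (fun x : Euc N => u x ^ 2) := hu2.integrable_sq
    have hgradsq : Integrable (fun x : Euc N => ‖gradient u x‖ ^ 2) :=
      (memLp_two_iff_integrable_sq_norm hugrad.aestronglyMeasurable).1 hugrad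
    have hG0 : 0 ≤ gradN2 N u := integral_nonneg (fun x => by positivity)
    -- Hardy
    have hhar := hardy N hN u huc husq
    have hGof : ∫⁻ x : Euc N, ENNReal.ofReal (‖gradient u x‖ ^ 2)
        = ENNReal.ofReal (gradN2 N u) := by
      rw [gradN2, ← ofReal_integral_eq_lintegral_ofReal hgradsq
        (ae_of_all _ fun x => by positivity)]
    rw [hGof, ← ENNReal.ofReal_mul (by positivity)] at hhar
    -- the dominating function
    set h : Euc N → ℝ := fun x => ((N:ℝ)-2)^2 * θ / 2 * (u x ^ 2 / ‖x‖ ^ 2) with hh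
    have hmeas : Measurable h := by fun_prop
    have hnn : ∀ x, 0 ≤ h x := fun x => by positivity
    have hlint : ∫⁻ x : Euc N, ENNReal.ofReal (h x)
        = ENNReal.ofReal (((N:ℝ)-2)^2 * θ / 2) * ∫⁻ x : Euc N, ENNReal.ofReal (u x ^ 2 / ‖x‖ ^ 2) := by
      rw [← lintegral_const_mul' _ _ ENNReal.ofReal_ne_top]
      apply lintegral_congr
      intro x
      rw [← ENNReal.ofReal_mul (by positivity)]
    have hlfin : ∫⁻ x : Euc N, ENNReal.ofReal (h x) < ⊤ := by
      rw [hlint]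
      calc ENNReal.ofReal (((N:ℝ)-2)^2 * θ / 2) * ∫⁻ x : Euc N, ENNReal.ofReal (u x ^ 2 / ‖x‖ ^ 2)
          ≤ ENNReal.ofReal (((N:ℝ)-2)^2 * θ / 2) * ENNReal.ofReal (4 / ((N:ℝ) - 2) ^ 2 * gradN2 N u) :=
            mul_le_mul_right hhar _
        _ < ⊤ := ENNReal.mul_lt_top ENNReal.ofReal_lt_top ENNReal.ofReal_lt_top
    have hhint : Integrable h := by
      refine ⟨hmeas.aestronglyMeasurable, ?_⟩
      rw [hasFiniteIntegral_iff_ofReal (ae_of_all _ hnn)]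
      exact hlfin
    -- a.e. pointwise bound
    haveI : Nontrivial (Euc N) := by
      apply Module.nontrivial_of_finrank_pos (R := ℝ)
      rw [finrank_euclideanSpace_fin]
      omega
    have h0 : ∀ᵐ x : Euc N ∂volume, x ≠ 0 := by
      rw [ae_iff]
      have : {x : Euc N | ¬ x ≠ 0} = {0} := by ext x; simp
      rw [this]
      exact measure_singleton 0
    have hptw : ∀ᵐ x : Euc N ∂volume, dV N V x * (u x) ^ 2 ≤ h x := by
      filter_upwards [h0] with x hx
      have hb := hVbd x hx
      have hnx : (0:ℝ) < ‖x‖ := norm_pos_iff.2 hx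
      have := mul_le_mul_of_nonneg_right hb (sq_nonneg (u x))
      calc dV N V x * u x ^ 2 ≤ ((N:ℝ)-2)^2 * θ / (2 * ‖x‖^2) * u x ^ 2 := this
        _ = h x := by rw [hh]; field_simp
    have hIle : (∫ x : Euc N, dV N V x * (u x) ^ 2) ≤ ∫ x : Euc N, h x :=
      integral_mono_ae hint hhint hptw
    -- compute ∫ h
    have hSle : (∫ x : Euc N, u x ^ 2 / ‖x‖ ^ 2) ≤ 4 / ((N:ℝ) - 2) ^ 2 * gradN2 N u := by
      have hm2 : AEStronglyMeasurable (fun x : Euc N => u x ^ 2 / ‖x‖ ^ 2) volume := by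
        apply Measurable.aestronglyMeasurable
        fun_prop
      rw [integral_eq_lintegral_of_nonneg_ae (ae_of_all _ fun x => by positivity) hm2]
      exact ENNReal.toReal_le_of_le_ofReal (by positivity) hhar
    have hhval : (∫ x : Euc N, h x) = ((N:ℝ)-2)^2 * θ / 2 * ∫ x : Euc N, u x ^ 2 / ‖x‖ ^ 2 := by
      rw [hh]
      exact integral_const_mul _ _
    rw [hhval] at hIle
    calc (∫ x : Euc N, dV N V x * (u x) ^ 2)
        ≤ ((N:ℝ)-2)^2 * θ / 2 * ∫ x : Euc N, u x ^ 2 / ‖x‖ ^ 2 := hIle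
      _ ≤ ((N:ℝ)-2)^2 * θ / 2 * (4 / ((N:ℝ) - 2) ^ 2 * gradN2 N u) := by
          apply mul_le_mul_of_nonneg_left hSle (by positivity)
      _ = 2 * θ * gradN2 N u := by field_simp; ring
  constructor
  · intro u hu hint
    have hm := main u hu hint
    have hG0 : 0 ≤ gradN2 N u := integral_nonneg (fun x => by positivity)
    rw [← sub_nonneg]
    have e : 1 / (N : ℝ) * gradN2 N u - 1 / (2 * (N : ℝ)) * (∫ x : Euc N, dV N V x * (u x) ^ 2)
        - (1 - θ) / (N : ℝ) * gradN2 N u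
        = (2 * θ * gradN2 N u - ∫ x : Euc N, dV N V x * (u x) ^ 2) / (2 * (N:ℝ)) := by
      field_simp
      ring
    rw [e]
    apply div_nonneg (by linarith) (by positivity)
  · intro f hf lam u hu hF hVu2 hdVu2 hP
    obtain ⟨huc, hu2, hugrad⟩ := hu
    have hgradsq : Integrable (fun x : Euc N => ‖gradient u x‖ ^ 2) :=
      (memLp_two_iff_integrable_sq_norm hugrad.aestronglyMeasurable).1 hugrad
    have hG0 : 0 ≤ gradN2 N u := integral_nonneg (fun x => by positivity)
    have hsplit1 : (∫ x : Euc N, (‖gradient u x‖ ^ 2 + V x * (u x) ^ 2))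
        = gradN2 N u + ∫ x : Euc N, V x * (u x) ^ 2 := by
      rw [gradN2]
      exact integral_add hgradsq hVu2
    have hsplit2 : (∫ x : Euc N, ((N : ℝ) * V x + dV N V x) * (u x) ^ 2)
        = (N:ℝ) * (∫ x : Euc N, V x * (u x) ^ 2) + ∫ x : Euc N, dV N V x * (u x) ^ 2 := by
      have e : (fun x : Euc N => ((N : ℝ) * V x + dV N V x) * (u x) ^ 2)
          = fun x : Euc N => (N:ℝ) * (V x * (u x) ^ 2) + dV N V x * (u x) ^ 2 := by
        funext x; ring
      rw [e, integral_add (hVu2.const_mul _) hdVu2, integral_const_mul]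
    have hIval : IfunL N V f lam u = 1 / (N:ℝ) * gradN2 N u
        - 1 / (2 * (N:ℝ)) * ∫ x : Euc N, dV N V x * (u x) ^ 2 := by
      rw [PfunL, hsplit2] at hP
      rw [IfunL, hsplit1]
      have hNne : (N:ℝ) ≠ 0 := ne_of_gt hN0
      field_simp
      nlinarith [hP]
    have h1 := main u ⟨huc, hu2, hugrad⟩ hdVu2
    constructor
    · rw [hIval, ← sub_nonneg]
      have e : 1 / (N : ℝ) * gradN2 N u - 1 / (2 * (N : ℝ)) * (∫ x : Euc N, dV N V x * (u x) ^ 2)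
          - (1 - θ) / (N : ℝ) * gradN2 N u
          = (2 * θ * gradN2 N u - ∫ x : Euc N, dV N V x * (u x) ^ 2) / (2 * (N:ℝ)) := by
        field_simp
        ring
      rw [e]
      apply div_nonneg (by linarith) (by positivity)
    · have h2 : 0 ≤ (1 - θ) / (N : ℝ) * gradN2 N u := by
        apply mul_nonneg (div_nonneg (by linarith) hN0.le) hG0
      calc (0:ℝ) ≤ (1 - θ) / (N : ℝ) * gradN2 N u := h2
        _ ≤ IfunL N V f lam u := by
            rw [hIval, ← sub_nonneg]
            have e : 1 / (N : ℝ) * gradN2 N u - 1 / (2 * (N : ℝ)) * (∫ x : Euc N, dV N V x * (u x) ^ 2)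
                - (1 - θ) / (N : ℝ) * gradN2 N u
                = (2 * θ * gradN2 N u - ∫ x : Euc N, dV N V x * (u x) ^ 2) / (2 * (N:ℝ)) := by
              field_simp
              ring
            rw [e]
            apply div_nonneg (by linarith) (by positivity)
end
end
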